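/- arXiv:1912.00459 — 12 statements merged into one kernel-verified Lean document; each statement's English description precedes it below -/
import Mathlib

section
/- Given n agents with additive valuations over m divisible objects and any feasible fractional allocation z*, there exists a feasible fractional allocation z with at most n sharings such that every agent receives exactly the same utility as in z*. -/
open Finset

/-- `z` is a feasible fractional allocation of `m` objects among `n` agents. -/
def isAlloc {n m : ℕ} (z : Fin n → Fin m → ℝ) : Prop :=
  (∀ i o, 0 ≤ z i o) ∧ ∀ o, ∑ i, z i o = 1

/-- Agent `i`'s additive utility for her own bundle in allocation `z`. -/
noncomputable def util {n m : ℕ} (v z : Fin n → Fin m → ℝ) (i : Fin n) : ℝ :=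
  ∑ o, v i o * z i o

/-- The number of sharings of allocation `z`: `Σ_o (|{i : z i o > 0}| − 1)`. -/
noncomputable def sharings {n m : ℕ} (z : Fin n → Fin m → ℝ) : ℕ :=
  ∑ o, ((univ.filter fun i => 0 < z i o).card - 1)

section aux

variable {n m : ℕ}

/-- extension by zero from functions on a finset of pairs -/
noncomputable def extMap (S : Finset (Fin n × Fin m)) :
    (↥S → ℝ) →ₗ[ℝ] (Fin n → Fin m → ℝ) where
  toFun f i o := if h : (i, o) ∈ S then f ⟨(i, o), h⟩ else 0
  map_add' f g := by funext i o; simp only [Pi.add_apply]; split <;> simp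
  map_smul' c f := by funext i o; simp only [Pi.smul_apply, RingHom.id_apply, smul_eq_mul]
                      split <;> simp

/-- constraints map: column sums and utilities -/
noncomputable def consMap (v : Fin n → Fin m → ℝ) :
    (Fin n → Fin m → ℝ) →ₗ[ℝ] (Fin m → ℝ) × (Fin n → ℝ) where
  toFun z := (fun o => ∑ i, z i o, fun i => ∑ o, v i o * z i o)
  map_add' z w := by
    ext x
    · simp [Finset.sum_add_distrib]
    · simp [Finset.sum_add_distrib, mul_add]
  map_smul' c z := by
    ext x
    · simp [Finset.mul_sum]
    · simp [Finset.mul_sum]; ring_nf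
      exact Finset.sum_congr rfl fun _ _ => by ring

lemma exists_kernel_vector (v : Fin n → Fin m → ℝ) (S : Finset (Fin n × Fin m))
    (hS : m + n < S.card) :
    ∃ w : Fin n → Fin m → ℝ, w ≠ 0 ∧ (∀ p : Fin n × Fin m, p ∉ S → w p.1 p.2 = 0) ∧
      (∀ o, ∑ i, w i o = 0) ∧ (∀ i, ∑ o, v i o * w i o = 0) := by
  set ψ := (consMap v).comp (extMap S) with hψ
  have hnotinj : ¬ Function.Injective ψ := by
    intro hinj
    have h1 := LinearMap.finrank_le_finrank_of_injective hinj
    have h2 : Module.finrank ℝ (↥S → ℝ) = S.card := by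
      simp [Module.finrank_fintype_fun_eq_card]
    have h3 : Module.finrank ℝ ((Fin m → ℝ) × (Fin n → ℝ)) = m + n := by
      simp [Module.finrank_prod, Module.finrank_fintype_fun_eq_card]
    omega
  rw [Function.not_injective_iff] at hnotinj
  obtain ⟨a, b, hab, hne⟩ := hnotinj
  set f := a - b with hfdef
  have hfne : f ≠ 0 := sub_ne_zero.mpr hne
  have hker : ψ f = 0 := by rw [hfdef, map_sub, hab, sub_self]
  refine ⟨extMap S f, ?_, ?_, ?_, ?_⟩
  · intro h
    apply hfne
    funext p
    have := congrFun (congrFun h p.1.1) p.1.2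
    simpa [extMap, dif_pos, Prod.mk.eta] using this
  · intro p hp
    simp [extMap, dif_neg hp]
  · intro o
    have := congrFun (congr_arg Prod.fst hker) o
    simpa [ψ, consMap] using this
  · intro i
    have := congrFun (congr_arg Prod.snd hker) i
    simpa [ψ, consMap] using this

lemma reduce (v : Fin n → Fin m → ℝ) :
    ∀ k (z : Fin n → Fin m → ℝ), isAlloc z →
      (univ.filter fun p : Fin n × Fin m => 0 < z p.1 p.2).card ≤ k →
      ∃ z', isAlloc z' ∧
        (univ.filter fun p : Fin n × Fin m => 0 < z' p.1 p.2).card ≤ m + n ∧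
        ∀ i, util v z' i = util v z i := by
  intro k
  induction k with
  | zero =>
    intro z hz hc
    exact ⟨z, hz, le_trans hc (Nat.zero_le _), fun i => rfl⟩
  | succ k ih =>
    intro z hz hc
    set S := univ.filter fun p : Fin n × Fin m => 0 < z p.1 p.2 with hSdef
    by_cases hle : S.card ≤ m + n
    · exact ⟨z, hz, hle, fun i => rfl⟩
    push_neg at hle
    obtain ⟨w, hw0, hwsupp, hwcol, hwutil⟩ := exists_kernel_vector v S hle
    -- there is a negative entry of w
    have hneg : (S.filter fun p => w p.1 p.2 < 0).Nonempty := by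
      have : ∃ i o, w i o ≠ 0 := by
        by_contra h
        push_neg at h
        exact hw0 (funext fun i => funext fun o => h i o)
      obtain ⟨i, o, hio⟩ := this
      have : ∃ i', w i' o < 0 := by
        by_contra h
        push_neg at h
        rcases lt_or_eq_of_le (h i) with hpos | heq
        · have hsum := hwcol o
          have : w i o ≤ ∑ i', w i' o :=
            Finset.single_le_sum (fun i' _ => h i') (mem_univ i)
          rw [hsum] at this
          exact absurd (le_antisymm this (le_of_lt hpos)) (ne_of_gt hpos)
        · exact hio heq.symm
      obtain ⟨i', hi'⟩ := this
      refine ⟨(i', o), ?_⟩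
      rw [mem_filter]
      refine ⟨?_, hi'⟩
      by_contra hnot
      exact absurd (hwsupp (i', o) hnot) (ne_of_lt hi')
    set N := S.filter fun p => w p.1 p.2 < 0 with hNdef
    set T := N.inf' hneg (fun p => z p.1 p.2 / (-(w p.1 p.2))) with hTdef
    have hT0 : 0 ≤ T := by
      apply Finset.le_inf'
      intro p hp
      rw [hNdef, mem_filter] at hp
      have hz0 : 0 ≤ z p.1 p.2 := hz.1 p.1 p.2
      have : 0 < -(w p.1 p.2) := by linarith [hp.2]
      positivity
    set z' := fun i o => z i o + T * w i o with hz'def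
    have hz'nonneg : ∀ i o, 0 ≤ z' i o := by
      intro i o
      rcases le_or_gt 0 (w i o) with hw | hw
      · exact add_nonneg (hz.1 i o) (mul_nonneg hT0 hw)
      · have hmem : (i, o) ∈ N := by
          rw [hNdef, mem_filter, hSdef, mem_filter]
          refine ⟨⟨mem_univ _, ?_⟩, hw⟩
          rcases lt_or_eq_of_le (hz.1 i o) with h | h
          · exact h
          · exact absurd (hwsupp (i, o) (by
              rw [hSdef, mem_filter]
              push_neg
              intro _
              rw [← h])) (ne_of_lt hw)
        have hTle : T ≤ z i o / (-(w i o)) := Finset.inf'_le _ hmem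
        have hwpos : 0 < -(w i o) := by linarith
        rw [le_div_iff₀ hwpos] at hTle
        simp only [hz'def]
        nlinarith
    have hz'col : ∀ o, ∑ i, z' i o = 1 := by
      intro o
      simp only [hz'def]
      rw [Finset.sum_add_distrib, ← Finset.mul_sum, hwcol o, hz.2 o]
      ring
    have hz'util : ∀ i, util v z' i = util v z i := by
      intro i
      simp only [util, hz'def]
      have : ∀ o ∈ (univ : Finset (Fin m)),
          v i o * (z i o + T * w i o) = v i o * z i o + T * (v i o * w i o) := by
        intro o _; ring
      rw [Finset.sum_congr rfl this, Finset.sum_add_distrib, ← Finset.mul_sum, hwutil i]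
      ring
    -- support shrinks strictly
    have hsub : (univ.filter fun p : Fin n × Fin m => 0 < z' p.1 p.2) ⊂ S := by
      constructor
      · intro p hp
        rw [mem_filter] at hp
        rw [hSdef, mem_filter]
        refine ⟨mem_univ _, ?_⟩
        rcases lt_or_eq_of_le (hz.1 p.1 p.2) with h | h
        · exact h
        · exfalso
          have hpnot : p ∉ S := by
            rw [hSdef, mem_filter]
            push_neg
            intro _
            rw [← h]
          have := hwsupp p hpnot
          have : z' p.1 p.2 = 0 := by
            simp only [hz'def]
            rw [← h, this]
            ring
          rw [this] at hp
          exact absurd hp.2 (lt_irrefl 0)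
      · intro hcon
        obtain ⟨p₀, hp₀N, hTeq⟩ := Finset.exists_mem_eq_inf' hneg
          (fun p => z p.1 p.2 / (-(w p.1 p.2)))
        rw [hNdef, mem_filter] at hp₀N
        have hwne : w p₀.1 p₀.2 ≠ 0 := ne_of_lt hp₀N.2
        have hz'zero : z' p₀.1 p₀.2 = 0 := by
          show z p₀.1 p₀.2 + T * w p₀.1 p₀.2 = 0
          rw [hTdef, hTeq, div_mul_eq_mul_div, mul_comm,
            ← div_mul_eq_mul_div, div_neg, div_self hwne]
          ring
        have : p₀ ∈ univ.filter fun p : Fin n × Fin m => 0 < z' p.1 p.2 :=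
          hcon hp₀N.1
        rw [mem_filter] at this
        rw [hz'zero] at this
        exact absurd this.2 (lt_irrefl 0)
    have hcard : (univ.filter fun p : Fin n × Fin m => 0 < z' p.1 p.2).card ≤ k := by
      have := Finset.card_lt_card hsub
      omega
    obtain ⟨z'', hz''a, hz''c, hz''u⟩ := ih z' ⟨hz'nonneg, hz'col⟩ hcard
    exact ⟨z'', hz''a, hz''c, fun i => (hz''u i).trans (hz'util i)⟩

end aux

/-- For any feasible allocation `z*` there is a feasible allocation with at most `n`
sharings giving every agent exactly the same utility. -/
theorem exists_same_utilities_few_sharings {n m : ℕ}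
    (v zs : Fin n → Fin m → ℝ) (hzs : isAlloc zs) :
    ∃ z : Fin n → Fin m → ℝ, isAlloc z ∧ sharings z ≤ n ∧
      ∀ i, util v z i = util v zs i := by
  obtain ⟨z, hza, hzc, hzu⟩ := reduce v
    (univ.filter fun p : Fin n × Fin m => 0 < zs p.1 p.2).card zs hzs le_rfl
  refine ⟨z, hza, ?_, hzu⟩
  have hfib : (univ.filter fun p : Fin n × Fin m => 0 < z p.1 p.2).card
      = ∑ o, (univ.filter fun i => 0 < z i o).card := by
    rw [Finset.card_eq_sum_card_fiberwise
      (f := fun p : Fin n × Fin m => p.2) (t := univ) (fun p _ => mem_univ _)]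
    refine Finset.sum_congr rfl fun o _ => ?_
    apply Finset.card_bij' (fun p _ => p.1) (fun i _ => (i, o))
    case hi =>
      intro p hp
      rw [mem_filter] at hp
      obtain ⟨hp1, hp2⟩ := hp
      rw [mem_filter] at hp1
      rw [mem_filter]
      exact ⟨mem_univ _, hp2 ▸ hp1.2⟩
    case hj =>
      intro i hi
      rw [mem_filter] at hi
      rw [mem_filter, mem_filter]
      exact ⟨⟨mem_univ _, hi.2⟩, rfl⟩
    case left_inv =>
      intro p hp
      rw [mem_filter] at hp
      exact Prod.ext rfl hp.2.symm
    case right_inv =>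
      intro i _
      rfl
  have hpos : ∀ o, 1 ≤ (univ.filter fun i => 0 < z i o).card := by
    intro o
    rw [Nat.one_le_iff_ne_zero, ← Nat.pos_iff_ne_zero, Finset.card_pos]
    by_contra h
    rw [Finset.not_nonempty_iff_eq_empty, Finset.filter_eq_empty_iff] at h
    have h0 : ∑ i, z i o = 0 := Finset.sum_eq_zero fun i _ =>
      le_antisymm (not_lt.mp (h (mem_univ i))) (hza.1 i o)
    rw [hza.2 o] at h0
    norm_num at h0
  have key : sharings z + m ≤ m + n := by
    have heq : sharings z + m = ∑ o, (univ.filter fun i => 0 < z i o).card := by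
      simp only [sharings]
      have hs : ∑ o : Fin m, ((univ.filter fun i => 0 < z i o).card - 1) + ∑ _o : Fin m, 1
          = ∑ o : Fin m, (univ.filter fun i => 0 < z i o).card := by
        rw [← Finset.sum_add_distrib]
        exact Finset.sum_congr rfl fun o _ => Nat.sub_add_cancel (hpos o)
      simpa using hs
    rw [heq, ← hfib]
    exact hzc
  omega
end

section
/- The bound n in the utility-preserving sharing theorem is tight: there exists an instance with n agents and n objects, and a feasible allocation z*, such that no allocation giving every agent exactly the same utility as z* has fewer than n shared objects. -/
open Finset

/-- Tightness of the bound `n` for utility-preserving allocations: in the instance where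
agent `i` values good `i` at `n² − n + 1` and every other good at `1`, and `z*` is the
equal split, every allocation giving each agent exactly the same utility as `z*` has
at least `n` shared objects. -/
theorem same_utilities_n_shared_objects_tight (n : ℕ) (hn : 2 ≤ n)
    (v : Fin n → Fin n → ℝ)
    (hv : ∀ i o, v i o = if i = o then (n : ℝ)^2 - n + 1 else 1)
    (zs : Fin n → Fin n → ℝ) (hzs : ∀ i o, zs i o = 1 / n) :
    ∀ z : Fin n → Fin n → ℝ, isAlloc z → (∀ i, util v z i = util v zs i) →
      n ≤ (univ.filter fun o : Fin n => ∃ i, 0 < z i o ∧ z i o < 1).card := by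
  have hn2 : (2 : ℝ) ≤ (n : ℝ) := by exact_mod_cast hn
  have hn0 : (n : ℝ) ≠ 0 := by linarith
  have hvpos : ∀ i o : Fin n, 0 ≤ v i o := by
    intro i o; rw [hv]; split <;> nlinarith
  have hzs_util : ∀ i, util v zs i = n := by
    intro i
    have : ∀ o : Fin n, v i o * zs i o
        = (if i = o then ((n : ℝ)^2 - n)/n else 0) + 1/n := by
      intro o; rw [hv, hzs]; split <;> field_simp <;> simp
    rw [util, Finset.sum_congr rfl fun o _ => this o, Finset.sum_add_distrib,
      Finset.sum_ite_eq, Finset.sum_const]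
    simp only [Finset.mem_univ, if_true, Finset.card_univ, Fintype.card_fin, nsmul_eq_mul]
    field_simp
    ring
  rintro z ⟨hpos, hcol⟩ hutil
  have key : ∀ o : Fin n, ∃ i, 0 < z i o ∧ z i o < 1 := by
    intro o
    by_contra h
    push_neg at h
    obtain ⟨j, hj⟩ : ∃ j, 0 < z j o := by
      by_contra hc; push_neg at hc
      have h0 : ∑ i, z i o = 0 :=
        Finset.sum_eq_zero fun i _ => le_antisymm (hc i) (hpos i o)
      rw [hcol o] at h0; norm_num at h0
    have hj1 : 1 ≤ z j o := h j hj
    have hsplit : z j o + ∑ i ∈ univ.erase j, z i o = 1 :=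
      (Finset.add_sum_erase univ (fun i => z i o) (Finset.mem_univ j)).trans (hcol o)
    have hrest_nonneg : 0 ≤ ∑ i ∈ univ.erase j, z i o :=
      Finset.sum_nonneg fun i _ => hpos i o
    have hrest0 : ∀ i ∈ univ.erase j, z i o = 0 :=
      (Finset.sum_eq_zero_iff_of_nonneg fun i _ => hpos i o).mp
        (le_antisymm (by linarith) hrest_nonneg)
    have hjo : z j o = 1 := by
      have : ∑ i ∈ univ.erase j, z i o = 0 :=
        Finset.sum_eq_zero fun i hi => hrest0 i hi
      linarith
    by_cases hjeq : j = o
    · -- agent j = o fully owns her own good, utility too large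
      subst hjeq
      have hterm : v j j * z j j = (n : ℝ)^2 - n + 1 := by
        rw [hv, hjo]; simp
      have hge : v j j * z j j ≤ util v z j := by
        rw [util]
        exact Finset.single_le_sum (f := fun o' => v j o' * z j o')
          (fun o' _ => mul_nonneg (hvpos j o') (hpos j o')) (Finset.mem_univ j)
      have := hutil j
      rw [hzs_util j] at this
      nlinarith [hterm, hge]
    · -- agent j ≠ o owns good o; then agent o's row sum is n, forcing z j ⋅ = 0
      have hzoo : z o o = 0 :=
        hrest0 o (Finset.mem_erase.mpr ⟨fun hc => hjeq hc.symm, Finset.mem_univ o⟩)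
      have hrow : ∑ o', z o o' = (n : ℝ) := by
        have heq : ∀ o' : Fin n, v o o' * z o o' = z o o' := by
          intro o'; rw [hv]
          by_cases h' : o = o'
          · subst h'; rw [hzoo]; simp
          · simp [h']
        have : util v z o = ∑ o', z o o' := by
          rw [util]; exact Finset.sum_congr rfl fun o' _ => heq o'
        rw [← this, hutil o, hzs_util o]
      have htotal : ∑ i, ∑ o', z i o' = (n : ℝ) := by
        rw [Finset.sum_comm]
        simp [hcol]
      have hsplit2 : ∑ o', z o o' + ∑ i ∈ univ.erase o, ∑ o', z i o' = (n : ℝ) :=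
        (Finset.add_sum_erase univ (fun i => ∑ o', z i o') (Finset.mem_univ o)).trans htotal
      have hrows0 : ∀ i ∈ univ.erase o, ∑ o', z i o' = 0 :=
        (Finset.sum_eq_zero_iff_of_nonneg fun i _ =>
          Finset.sum_nonneg fun o' _ => hpos i o').mp
          (le_antisymm (by linarith)
            (Finset.sum_nonneg fun i _ => Finset.sum_nonneg fun o' _ => hpos i o'))
      have hjrow : ∑ o', z j o' = 0 :=
        hrows0 j (Finset.mem_erase.mpr ⟨hjeq, Finset.mem_univ j⟩)
      have hzjo0 : z j o = 0 :=
        (Finset.sum_eq_zero_iff_of_nonneg fun o' _ => hpos j o').mp hjrow o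
          (Finset.mem_univ o)
      rw [hzjo0] at hjo
      norm_num at hjo
  have hfilter : (univ.filter fun o : Fin n => ∃ i, 0 < z i o ∧ z i o < 1) = univ :=
    Finset.filter_true_of_mem fun o _ => key o
  rw [hfilter, Finset.card_univ, Fintype.card_fin]
end

section
/- The bound n−1 in the Pareto-improvement sharing theorem is tight: in the instance with n agents and n−1 goods each valued at n by all agents, every allocation giving each agent utility at least n−1 must have at least n−1 shared objects. -/
open Finset

/-- Tightness of the bound `n − 1`: with `n` agents and `n − 1` goods all valued at `n` by
everyone, every allocation giving each agent utility at least `n − 1` must have at least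
`n − 1` shared objects. -/
theorem pareto_improvement_shared_objects_tight (n : ℕ) (hn : 2 ≤ n)
    (v : Fin n → Fin (n - 1) → ℝ) (hv : ∀ i o, v i o = (n : ℝ))
    (z : Fin n → Fin (n - 1) → ℝ) (hz : isAlloc z)
    (hu : ∀ i, (n : ℝ) - 1 ≤ util v z i) :
    n - 1 ≤ (univ.filter fun o : Fin (n - 1) => ∃ i, 0 < z i o ∧ z i o < 1).card := by
  obtain ⟨hpos, hsum⟩ := hz
  have hcast : ((n - 1 : ℕ) : ℝ) = (n : ℝ) - 1 := by
    rw [Nat.cast_sub (by omega)]; simp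
  have hutil : ∀ i, util v z i = (n : ℝ) * ∑ o, z i o := by
    intro i
    simp only [util, hv]
    rw [Finset.mul_sum]
  have htot : ∑ i, util v z i = (n : ℝ) * ((n : ℝ) - 1) := by
    simp only [hutil]
    rw [← Finset.mul_sum, Finset.sum_comm]
    simp [hsum, ← hcast]
  have key : ∀ o : Fin (n-1), ∃ i, 0 < z i o ∧ z i o < 1 := by
    by_contra h
    push_neg at h
    obtain ⟨o, ho⟩ := h
    have hex : ∃ j, 1 ≤ z j o := by
      by_contra hc
      push_neg at hc
      have hz0 : ∀ i ∈ Finset.univ, z i o = 0 := by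
        intro i _
        rcases lt_or_ge 0 (z i o) with h1 | h1
        · exact absurd (ho i h1) (not_le.mpr (hc i))
        · linarith [hpos i o]
      have := hsum o
      rw [Finset.sum_eq_zero hz0] at this
      norm_num at this
    obtain ⟨j, hj⟩ := hex
    have hrow : (1 : ℝ) ≤ ∑ o', z j o' :=
      le_trans hj (Finset.single_le_sum (fun o' _ => hpos j o') (Finset.mem_univ o))
    have hutj : (n : ℝ) ≤ util v z j := by
      rw [hutil]
      have h1 : (1 : ℝ) ≤ (n : ℝ) := by exact_mod_cast (by omega : 1 ≤ n)
      nlinarith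
    have hsplit : ∑ i, util v z i = util v z j + ∑ i ∈ Finset.univ.erase j, util v z i := by
      rw [← Finset.add_sum_erase _ _ (Finset.mem_univ j)]
    have hrest : ((n : ℝ) - 1) * ((n : ℝ) - 1) ≤ ∑ i ∈ Finset.univ.erase j, util v z i := by
      have hcard : (Finset.univ.erase j).card = n - 1 := by
        rw [Finset.card_erase_of_mem (Finset.mem_univ j)]
        simp
      calc ((n : ℝ) - 1) * ((n : ℝ) - 1)
          = (Finset.univ.erase j).card * ((n : ℝ) - 1) := by rw [hcard, hcast]
        _ = ∑ _i ∈ Finset.univ.erase j, ((n : ℝ) - 1) := by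
            rw [Finset.sum_const, nsmul_eq_mul]
        _ ≤ ∑ i ∈ Finset.univ.erase j, util v z i :=
            Finset.sum_le_sum (fun i _ => hu i)
    have hn2 : (2 : ℝ) ≤ (n : ℝ) := by exact_mod_cast hn
    nlinarith [htot, hsplit, hutj, hrest]
  have : (Finset.univ.filter fun o : Fin (n - 1) => ∃ i, 0 < z i o ∧ z i o < 1) = Finset.univ := by
    rw [Finset.filter_true_of_mem (fun o _ => key o)]
  rw [this, Finset.card_univ, Fintype.card_fin]
end

section
/- For any n agents with additive valuations, there exists a proportional fractional allocation with at most n−1 sharings. -/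
open Finset

section aux
variable {n m : ℕ}

noncomputable def colMap (n m : ℕ) : (Fin n → Fin m → ℝ) →ₗ[ℝ] (Fin m → ℝ) where
  toFun z := fun o => ∑ i, z i o
  map_add' x y := by funext o; simp [Finset.sum_add_distrib]
  map_smul' c x := by funext o; simp [Finset.mul_sum]

noncomputable def utilMap (v : Fin n → Fin m → ℝ) : (Fin n → Fin m → ℝ) →ₗ[ℝ] (Fin n → ℝ) where
  toFun z := fun i => ∑ o, v i o * z i o
  map_add' x y := by funext i; simp [mul_add, Finset.sum_add_distrib]
  map_smul' c x := by
    funext i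
    simp only [Pi.smul_apply, smul_eq_mul, RingHom.id_apply, Finset.mul_sum]
    exact Finset.sum_congr rfl fun o _ => by ring

noncomputable def phiMap (v : Fin n → Fin m → ℝ) : (Fin n → Fin m → ℝ) →ₗ[ℝ] ℝ where
  toFun z := ∑ i, ∑ o, v i o * z i o
  map_add' x y := by simp [mul_add, Finset.sum_add_distrib]
  map_smul' c x := by
    simp only [smul_eq_mul, RingHom.id_apply, Pi.smul_apply, Finset.mul_sum]
    exact Finset.sum_congr rfl fun i _ => Finset.sum_congr rfl fun o _ => by ring

noncomputable def jmap (S : Finset (Fin n × Fin m)) : ((↥S) → ℝ) →ₗ[ℝ] (Fin n → Fin m → ℝ) where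
  toFun f := fun i o => if h : (i, o) ∈ S then f ⟨(i, o), h⟩ else 0
  map_add' f g := by funext i o; by_cases h : (i, o) ∈ S <;> simp [h]
  map_smul' c f := by funext i o; by_cases h : (i, o) ∈ S <;> simp [h]

lemma jmap_apply_coe (S : Finset (Fin n × Fin m)) (f : (↥S) → ℝ) (s : ↥S) :
    jmap S f s.1.1 s.1.2 = f s := by
  have h : (s.1.1, s.1.2) ∈ S := by rw [Prod.mk.eta]; exact s.2
  simp only [jmap, LinearMap.coe_mk, AddHom.coe_mk, dif_pos h]

lemma exists_pos_le {α : Type*} [Fintype α] (g : α → ℝ) (hg : ∀ a, 0 < g a) :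
    ∃ ε : ℝ, 0 < ε ∧ ∀ a, ε ≤ g a := by
  cases isEmpty_or_nonempty α with
  | inl h => exact ⟨1, one_pos, fun a => (h.false a).elim⟩
  | inr h =>
    refine ⟨Finset.univ.inf' Finset.univ_nonempty g, ?_,
      fun a => Finset.inf'_le g (Finset.mem_univ a)⟩
    rw [Finset.lt_inf'_iff]
    exact fun a _ => hg a

end aux

set_option maxHeartbeats 2000000 in
/-- There always exists a proportional allocation with at most `n − 1` sharings. -/
theorem exists_proportional_few_sharings {n m : ℕ} (hn : 0 < n)
    (v : Fin n → Fin m → ℝ) :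
    ∃ z : Fin n → Fin m → ℝ, isAlloc z ∧ sharings z ≤ n - 1 ∧
      ∀ i, (∑ o, v i o) / n ≤ util v z i := by
  classical
  have hn' : (0 : ℝ) < n := by exact_mod_cast hn
  set c : Fin n → ℝ := fun i => (∑ o, v i o) / n with hc
  set P : Set (Fin n → Fin m → ℝ) := {z | isAlloc z ∧ ∀ i, c i ≤ util v z i} with hPdef
  -- uniform allocation
  have huni : (fun (_ : Fin n) (_ : Fin m) => (n : ℝ)⁻¹) ∈ P := by
    refine ⟨⟨fun i o => by positivity, fun o => ?_⟩, fun i => ?_⟩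
    · simp [Finset.sum_const, Finset.card_univ]
      field_simp
    · simp only [util, c]
      rw [← Finset.sum_mul, div_eq_mul_inv]
  have hPne : P.Nonempty := ⟨_, huni⟩
  -- closedness
  have hPclosed : IsClosed P := by
    have hrw : P = (⋂ i, ⋂ o, {z : Fin n → Fin m → ℝ | 0 ≤ z i o}) ∩
        ((⋂ o, {z : Fin n → Fin m → ℝ | ∑ i, z i o = 1}) ∩
          ⋂ i, {z : Fin n → Fin m → ℝ | c i ≤ util v z i}) := by
      ext z
      simp only [hPdef, Set.mem_setOf_eq, Set.mem_inter_iff, Set.mem_iInter, isAlloc]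
      tauto
    rw [hrw]
    have hcont : ∀ (i : Fin n) (o : Fin m),
        Continuous fun z : Fin n → Fin m → ℝ => z i o := fun i o =>
      (continuous_apply o).comp (continuous_apply i)
    refine IsClosed.inter (isClosed_iInter fun i => isClosed_iInter fun o =>
        isClosed_le continuous_const (hcont i o)) (IsClosed.inter ?_ ?_)
    · exact isClosed_iInter fun o => isClosed_eq (by continuity) continuous_const
    · refine isClosed_iInter fun i => isClosed_le continuous_const ?_
      have : Continuous fun z : Fin n → Fin m → ℝ => ∑ o, v i o * z i o := by
        refine continuous_finset_sum _ fun o _ => (continuous_const.mul (hcont i o))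
      exact this
  -- compactness
  have hPcomp : IsCompact P := by
    have hK : IsCompact (Set.pi Set.univ fun _ : Fin n =>
        Set.pi Set.univ fun _ : Fin m => Set.Icc (0:ℝ) 1) :=
      isCompact_univ_pi fun _ => isCompact_univ_pi fun _ => isCompact_Icc
    refine hK.of_isClosed_subset hPclosed ?_
    intro z hz
    rintro i -
    rintro o -
    refine ⟨hz.1.1 i o, ?_⟩
    have h1 : z i o ≤ ∑ i', z i' o :=
      Finset.single_le_sum (f := fun i' => z i' o) (fun i' _ => hz.1.1 i' o) (Finset.mem_univ i)
    rw [hz.1.2 o] at h1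
    exact h1
  -- maximize total utility
  set φ : (Fin n → Fin m → ℝ) → ℝ := fun z => phiMap v z with hφ
  have hφcont : Continuous φ := (phiMap v).continuous_of_finiteDimensional
  obtain ⟨z0, hz0P, hz0max⟩ := hPcomp.exists_isMaxOn hPne hφcont.continuousOn
  set M : ℝ := φ z0 with hM
  have hmax : ∀ y ∈ P, φ y ≤ M := fun y hy => hz0max hy
  set F : Set (Fin n → Fin m → ℝ) := P ∩ {z | φ z = M} with hF
  have hFcomp : IsCompact F := hPcomp.inter_right (isClosed_eq hφcont continuous_const)
  have hFne : F.Nonempty := ⟨z0, hz0P, rfl⟩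
  obtain ⟨z, hzext⟩ := hFcomp.extremePoints_nonempty hFne
  have hzF : z ∈ F := hzext.1
  have hzP : z ∈ P := hzF.1
  have hzM : φ z = M := hzF.2
  -- transfer extremality to P
  have hextP : ∀ a ∈ P, ∀ b ∈ P, z ∈ openSegment ℝ a b → a = z ∧ b = z := by
    intro a ha b hb hseg
    obtain ⟨ta, tb, hta, htb, htab, heq⟩ := hseg
    have hlin : φ (ta • a + tb • b) = ta * φ a + tb * φ b := by
      simp [hφ, map_add, map_smul, smul_eq_mul]
    have haM : φ a ≤ M := hmax a ha
    have hbM : φ b ≤ M := hmax b hb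
    have hcomb : ta * φ a + tb * φ b = M := by rw [← hlin, heq]; exact hzM
    have haM' : φ a = M := by
      by_contra h
      have hlt : φ a < M := lt_of_le_of_ne haM h
      have hMM : ta * M + tb * M = M := by rw [← add_mul, htab, one_mul]
      linarith [mul_lt_mul_of_pos_left hlt hta, mul_le_mul_of_nonneg_left hbM htb.le]
    have hbM' : φ b = M := by
      by_contra h
      have hlt : φ b < M := lt_of_le_of_ne hbM h
      have hMM : ta * M + tb * M = M := by rw [← add_mul, htab, one_mul]
      linarith [mul_lt_mul_of_pos_left hlt htb, mul_le_mul_of_nonneg_left haM hta.le]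
    exact ⟨hzext.2 ⟨ha, haM'⟩ ⟨hb, hbM'⟩ ⟨ta, tb, hta, htb, htab, heq⟩,
      hzext.2 ⟨hb, hbM'⟩ ⟨ha, haM'⟩ ⟨tb, ta, htb, hta, by rw [add_comm]; exact htab,
        by rw [add_comm]; exact heq⟩⟩
  -- coordinate epsilon
  have coordEps : ∀ d : Fin n → Fin m → ℝ, (∀ i o, z i o = 0 → d i o = 0) →
      ∃ ε : ℝ, 0 < ε ∧ ∀ i o, ε * |d i o| ≤ z i o ∨ (z i o = 0 ∧ d i o = 0) := by
    intro d hd0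
    obtain ⟨ε₁, hε₁, hε₁le⟩ := exists_pos_le
      (fun p : Fin n × Fin m => if 0 < z p.1 p.2 then z p.1 p.2 / (|d p.1 p.2| + 1) else 1)
      (by intro p
          split
          · rename_i h; exact div_pos h (by positivity)
          · exact one_pos)
    refine ⟨ε₁, hε₁, fun i o => ?_⟩
    rcases eq_or_lt_of_le (hzP.1.1 i o) with h0 | hpos
    · exact Or.inr ⟨h0.symm, hd0 i o h0.symm⟩
    · left
      have h1 : ε₁ ≤ z i o / (|d i o| + 1) := by
        have h := hε₁le (i, o)
        rw [if_pos hpos] at h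
        exact h
      have h2 : ε₁ * (|d i o| + 1) ≤ z i o := by
        rw [← le_div_iff₀ (by positivity)]
        exact h1
      rw [mul_add, mul_one] at h2
      linarith
  -- key perturbation property
  have key : ∀ d : Fin n → Fin m → ℝ, (∀ i o, z i o = 0 → d i o = 0) →
      (∀ o, ∑ i, d i o = 0) → (∀ i, util v z i = c i → ∑ o, v i o * d i o = 0) → d = 0 := by
    intro d hd0 hcol hut
    obtain ⟨ε₁, hε₁, hε₁le⟩ := coordEps d hd0
    obtain ⟨ε₂, hε₂, hε₂le⟩ := exists_pos_le
      (fun i : Fin n => if util v z i = c i then 1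
        else (util v z i - c i) / (|∑ o, v i o * d i o| + 1))
      (by intro i
          split
          · exact one_pos
          · rename_i h
            have hlt : c i < util v z i := lt_of_le_of_ne (hzP.2 i) (Ne.symm h)
            exact div_pos (by linarith) (by positivity))
    set ε := min ε₁ ε₂ with hεdef
    have hε0 : 0 < ε := lt_min hε₁ hε₂
    have hcoord : ∀ i o, ε * |d i o| ≤ z i o ∨ (z i o = 0 ∧ d i o = 0) := by
      intro i o
      rcases hε₁le i o with h | h
      · exact Or.inl (le_trans
          (mul_le_mul_of_nonneg_right (min_le_left _ _) (abs_nonneg _)) h)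
      · exact Or.inr h
    have hslack : ∀ i, util v z i = c i ∨
        ε * |∑ o, v i o * d i o| ≤ util v z i - c i := by
      intro i
      by_cases h : util v z i = c i
      · exact Or.inl h
      · right
        have h1 : ε ≤ (util v z i - c i) / (|∑ o, v i o * d i o| + 1) := by
          have hh := hε₂le i
          rw [if_neg h] at hh
          exact le_trans (min_le_right _ _) hh
        have h2 : ε * (|∑ o, v i o * d i o| + 1) ≤ util v z i - c i := by
          rw [← le_div_iff₀ (by positivity)]
          exact h1
        rw [mul_add, mul_one] at h2
        linarith
    have hmem : ∀ η : ℝ, |η| ≤ ε → z + η • d ∈ P := by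
      intro η hη
      have hηabs : ∀ x : ℝ, |η * x| ≤ ε * |x| := fun x => by
        rw [abs_mul]; exact mul_le_mul_of_nonneg_right hη (abs_nonneg x)
      refine ⟨⟨fun i o => ?_, fun o => ?_⟩, fun i => ?_⟩
      · have happ : (z + η • d) i o = z i o + η * d i o := by simp
        rw [happ]
        rcases hcoord i o with h | ⟨h0, hd⟩
        · have ha1 := hηabs (d i o)
          have ha2 := neg_abs_le (η * d i o)
          linarith
        · rw [h0, hd]; norm_num
      · have hrw : ∑ i, (z + η • d) i o = ∑ i, (z i o + η * d i o) :=
          Finset.sum_congr rfl fun i _ => by simp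
        rw [hrw, Finset.sum_add_distrib, hzP.1.2 o, ← Finset.mul_sum, hcol o, mul_zero, add_zero]
      · have hu : util v (z + η • d) i = util v z i + η * ∑ o, v i o * d i o := by
          simp only [util, Pi.add_apply, Pi.smul_apply, smul_eq_mul, mul_add,
            Finset.sum_add_distrib, Finset.mul_sum]
          congr 1
          exact Finset.sum_congr rfl fun o _ => by ring
        rw [hu]
        rcases hslack i with h | h
        · rw [hut i h, mul_zero, add_zero, h]
        · have ha1 := hηabs (∑ o, v i o * d i o)
          have ha2 := neg_abs_le (η * ∑ o, v i o * d i o)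
          linarith [hzP.2 i]
    have hplus := hmem ε (by rw [abs_of_pos hε0])
    have hminus := hmem (-ε) (by rw [abs_neg, abs_of_pos hε0])
    have hmz : z + (-ε) • d = z - ε • d := by
      simp [neg_smul, sub_eq_add_neg]
    rw [hmz] at hminus
    have hseg : z ∈ openSegment ℝ (z - ε • d) (z + ε • d) := by
      refine ⟨1/2, 1/2, by norm_num, by norm_num, by norm_num, ?_⟩
      module
    have heqz := (hextP _ hminus _ hplus hseg).1
    have hsd : ε • d = 0 := by
      have := sub_eq_self.mp heqz
      exact this
    exact (smul_eq_zero.mp hsd).resolve_left (ne_of_gt hε0)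
  -- support of z
  set S : Finset (Fin n × Fin m) := Finset.univ.filter (fun p => 0 < z p.1 p.2) with hSdef
  have hjvan : ∀ f : (↥S) → ℝ, ∀ i o, z i o = 0 → jmap S f i o = 0 := by
    intro f i o h0
    have hns : (i, o) ∉ S := by
      simp only [hSdef, Finset.mem_filter, Finset.mem_univ, true_and]
      rw [h0]
      exact lt_irrefl 0
    simp [jmap, hns]
  have hker : ∀ f : (↥S) → ℝ, (∀ o, ∑ i, jmap S f i o = 0) →
      (∀ i, util v z i = c i → ∑ o, v i o * jmap S f i o = 0) → f = 0 := by
    intro f h1 h2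
    have hd := key (jmap S f) (hjvan f) h1 h2
    funext s
    have hs := congrFun (congrFun hd s.1.1) s.1.2
    rw [jmap_apply_coe] at hs
    exact hs
  have hScard : S.card ≤ m + n - 1 := by
    by_cases hT : ∀ i, util v z i = c i
    · -- all agents tight
      set Φ : ((↥S) → ℝ) →ₗ[ℝ] (Fin m → ℝ) × (Fin n → ℝ) :=
        ((colMap n m).prod (utilMap v)).comp (jmap S) with hΦ
      have hinj : Function.Injective Φ := by
        rw [← LinearMap.ker_eq_bot, LinearMap.ker_eq_bot']
        intro f hf
        have hc1 : ∀ o, ∑ i, jmap S f i o = 0 := fun o =>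
          congrFun (congrArg Prod.fst hf) o
        have hc2 : ∀ i, ∑ o, v i o * jmap S f i o = 0 := fun i =>
          congrFun (congrArg Prod.snd hf) i
        exact hker f hc1 fun i _ => hc2 i
      have hfr : S.card ≤ m + n := by
        have hle := LinearMap.finrank_le_finrank_of_injective hinj
        simpa [Module.finrank_pi, Module.finrank_prod, Fintype.card_coe] using hle
      have hne2 : S.card ≠ m + n := by
        intro hEq
        have hdim : Module.finrank ℝ ((↥S) → ℝ) =
            Module.finrank ℝ ((Fin m → ℝ) × (Fin n → ℝ)) := by
          simp [Module.finrank_pi, Module.finrank_prod, Fintype.card_coe, hEq]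
        have hsurj : Function.Surjective Φ :=
          (LinearMap.injective_iff_surjective_of_finrank_eq_finrank hdim).mp hinj
        obtain ⟨f, hff⟩ := hsurj (0, fun _ => (1 : ℝ))
        set d : Fin n → Fin m → ℝ := jmap S f with hd
        have hcold : ∀ o, ∑ i, d i o = 0 := by
          intro o
          have := congrFun (congrArg Prod.fst hff) o
          exact this
        have hutd : ∀ i, ∑ o, v i o * d i o = 1 := by
          intro i
          exact congrFun (congrArg Prod.snd hff) i
        obtain ⟨ε, hε0, hεle⟩ := coordEps d (hjvan f)
        have hmem : z + ε • d ∈ P := by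
          refine ⟨⟨fun i o => ?_, fun o => ?_⟩, fun i => ?_⟩
          · have happ : (z + ε • d) i o = z i o + ε * d i o := by simp
            rw [happ]
            rcases hεle i o with h | ⟨h0, hdio⟩
            · have := neg_abs_le (ε * d i o)
              have habs : |ε * d i o| = ε * |d i o| := by
                rw [abs_mul, abs_of_pos hε0]
              linarith [habs ▸ this, h]
            · rw [h0, hdio]; norm_num
          · have hrw : ∑ i, (z + ε • d) i o = ∑ i, (z i o + ε * d i o) :=
              Finset.sum_congr rfl fun i _ => by simp
            rw [hrw, Finset.sum_add_distrib, hzP.1.2 o, ← Finset.mul_sum, hcold o,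
              mul_zero, add_zero]
          · have hu : util v (z + ε • d) i = util v z i + ε * ∑ o, v i o * d i o := by
              simp only [util, Pi.add_apply, Pi.smul_apply, smul_eq_mul, mul_add,
                Finset.sum_add_distrib, Finset.mul_sum]
              congr 1
              exact Finset.sum_congr rfl fun o _ => by ring
            rw [hu, hutd i, mul_one]
            have := hzP.2 i
            linarith
        have hφd : φ (z + ε • d) = φ z + ε * (n : ℝ) := by
          have h1 : φ (z + ε • d) = φ z + ε * phiMap v d := by
            simp [hφ, map_add, map_smul]
          rw [h1]
          congr 1
          have h2 : phiMap v d = ∑ i, ∑ o, v i o * d i o := rfl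
          rw [h2]
          have h3 : ∀ i : Fin n, (fun i => ∑ o, v i o * d i o) i = 1 := hutd
          rw [Finset.sum_congr rfl fun i _ => hutd i]
          simp
        have hle2 : φ (z + ε • d) ≤ M := hmax _ hmem
        rw [hφd, hzM] at hle2
        nlinarith [hn', hε0]
      omega
    · -- some agent is not tight
      push_neg at hT
      obtain ⟨i0, hi0⟩ := hT
      set Φ : ((↥S) → ℝ) →ₗ[ℝ] (Fin m → ℝ) × ({i : Fin n // i ≠ i0} → ℝ) :=
        ((colMap n m).prod
          ((LinearMap.funLeft ℝ ℝ (fun i : {i : Fin n // i ≠ i0} => (i : Fin n))).comp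
            (utilMap v))).comp (jmap S) with hΦ
      have hinj : Function.Injective Φ := by
        rw [← LinearMap.ker_eq_bot, LinearMap.ker_eq_bot']
        intro f hf
        have hc1 : ∀ o, ∑ i, jmap S f i o = 0 := fun o =>
          congrFun (congrArg Prod.fst hf) o
        have hc2 : ∀ i, util v z i = c i → ∑ o, v i o * jmap S f i o = 0 := by
          intro i hi
          have hne : i ≠ i0 := fun h => hi0 (h ▸ hi)
          exact congrFun (congrArg Prod.snd hf) ⟨i, hne⟩
        exact hker f hc1 hc2
      have hle := LinearMap.finrank_le_finrank_of_injective hinj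
      have hcard' : Fintype.card {i : Fin n // i ≠ i0} = n - 1 := by
        simp [Fintype.card_subtype_compl, Fintype.card_subtype_eq]
      rw [Module.finrank_pi, Module.finrank_prod, Module.finrank_pi, Module.finrank_pi,
        Fintype.card_coe, hcard', Fintype.card_fin] at hle
      omega
  -- final counting
  refine ⟨z, hzP.1, ?_, fun i => hzP.2 i⟩
  have hdeg : ∀ o : Fin m, 1 ≤ (univ.filter fun i => 0 < z i o).card := by
    intro o
    have hex : ∃ i, 0 < z i o := by
      by_contra h
      push_neg at h
      have hz0 : ∀ i, z i o = 0 := fun i => le_antisymm (h i) (hzP.1.1 i o)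
      have : (1 : ℝ) = 0 := by
        rw [← hzP.1.2 o]
        exact Finset.sum_eq_zero fun i _ => hz0 i
      norm_num at this
    obtain ⟨i, hi⟩ := hex
    exact Finset.card_pos.mpr ⟨i, Finset.mem_filter.mpr ⟨Finset.mem_univ i, hi⟩⟩
  have hsum : ∑ o, (univ.filter fun i => 0 < z i o).card = S.card := by
    rw [hSdef, Finset.card_filter, Fintype.sum_prod_type_right]
    exact Finset.sum_congr rfl fun o _ => by rw [Finset.card_filter]
  have hfinal : sharings z + m = S.card := by
    have h1 : ∑ o, ((univ.filter fun i => 0 < z i o).card - 1) + ∑ o : Fin m, 1 =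
        ∑ o, (univ.filter fun i => 0 < z i o).card := by
      rw [← Finset.sum_add_distrib]
      exact Finset.sum_congr rfl fun o _ => Nat.sub_add_cancel (hdeg o)
    simpa [sharings, hsum] using h1
  omega
end

section
/- For any n agents with additive valuations and positive total values, there exists an equitable fractional allocation with at most n−1 sharings in which the common relative value is maximized over all equitable allocations. -/
open Finset

/-- `z` is equitable: all agents get the same relative value. -/
noncomputable def equitable {n m : ℕ} (v z : Fin n → Fin m → ℝ) : Prop :=
  ∀ i j, util v z i / (∑ o, v i o) = util v z j / (∑ o, v j o)

namespace MaxEqAux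
open Module

variable {n m : ℕ}

noncomputable def colSumL (n m : ℕ) : (Fin n → Fin m → ℝ) →ₗ[ℝ] (Fin m → ℝ) where
  toFun z o := ∑ i, z i o
  map_add' x y := by funext o; simp [Finset.sum_add_distrib]
  map_smul' c x := by funext o; simp [Finset.mul_sum]

noncomputable def utilL (v : Fin n → Fin m → ℝ) (i : Fin n) :
    (Fin n → Fin m → ℝ) →ₗ[ℝ] ℝ where
  toFun z := ∑ o, v i o * z i o
  map_add' x y := by simp [mul_add, Finset.sum_add_distrib]
  map_smul' c x := by simp [Finset.mul_sum, mul_left_comm]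

lemma util_add_mul (v z d : Fin n → Fin m → ℝ) (t : ℝ) (i : Fin n) :
    util v (fun i o => z i o + t * d i o) i = util v z i + t * utilL v i d := by
  simp [util, utilL, mul_add, Finset.sum_add_distrib, Finset.mul_sum, mul_left_comm]

noncomputable def sumL (n : ℕ) : (Fin n → ℝ) →ₗ[ℝ] ℝ where
  toFun f := ∑ i, f i
  map_add' x y := by simp [Finset.sum_add_distrib]
  map_smul' c x := by simp [Finset.mul_sum]

noncomputable def gL (v : Fin n → Fin m → ℝ) :
    (Fin n → Fin m → ℝ) →ₗ[ℝ] (Fin n → ℝ) :=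
  LinearMap.pi fun i =>
    (∑ o, v i o)⁻¹ • utilL v i - (n : ℝ)⁻¹ • ∑ j, (∑ o, v j o)⁻¹ • utilL v j

lemma gL_apply (v : Fin n → Fin m → ℝ) (z : Fin n → Fin m → ℝ) (i : Fin n) :
    gL v z i = (∑ o, v i o)⁻¹ * utilL v i z
      - (n : ℝ)⁻¹ * ∑ j, (∑ o, v j o)⁻¹ * utilL v j z := by
  simp [gL, LinearMap.pi_apply, LinearMap.sum_apply, smul_eq_mul]

lemma gL_mem_ker (hn : 0 < n) (v : Fin n → Fin m → ℝ) (z : Fin n → Fin m → ℝ) :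
    gL v z ∈ LinearMap.ker (sumL n) := by
  have hn' : (n : ℝ) ≠ 0 := Nat.cast_ne_zero.mpr hn.ne'
  simp only [LinearMap.mem_ker, sumL, LinearMap.coe_mk, AddHom.coe_mk]
  simp only [gL_apply, Finset.sum_sub_distrib, Finset.sum_const, card_univ,
    Fintype.card_fin, nsmul_eq_mul]
  field_simp
  ring

lemma finrank_ker_sumL (hn : 0 < n) :
    finrank ℝ (LinearMap.ker (sumL n)) = n - 1 := by
  have hsurj : Function.Surjective (sumL n) := by
    intro x
    refine ⟨Pi.single ⟨0, hn⟩ x, ?_⟩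
    simp [sumL]
  have h := LinearMap.finrank_range_add_finrank_ker (sumL n)
  rw [LinearMap.range_eq_top.mpr hsurj, finrank_top, finrank_self,
    finrank_pi, Fintype.card_fin] at h
  omega

noncomputable def Ltot (hn : 0 < n) (v : Fin n → Fin m → ℝ) :
    (Fin n → Fin m → ℝ) →ₗ[ℝ] (Fin m → ℝ) × LinearMap.ker (sumL n) :=
  (colSumL n m).prod ((gL v).codRestrict _ (gL_mem_ker hn v))

lemma finrank_target (hn : 0 < n) :
    finrank ℝ ((Fin m → ℝ) × LinearMap.ker (sumL n)) = m + (n - 1) := by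
  rw [Module.finrank_prod, finrank_ker_sumL hn, finrank_pi, Fintype.card_fin]

lemma exists_eps [Nonempty (Fin n × Fin m)] (z d : Fin n → Fin m → ℝ)
    (h0 : ∀ i o, 0 ≤ z i o) (hsupp : ∀ i o, d i o ≠ 0 → 0 < z i o) :
    ∃ ε > 0, ∀ t : ℝ, |t| ≤ ε → ∀ i o, 0 ≤ z i o + t * d i o := by
  classical
  have hne : (univ : Finset (Fin n × Fin m)).Nonempty := univ_nonempty
  set f : Fin n × Fin m → ℝ :=
    fun p => if d p.1 p.2 = 0 then 1 else z p.1 p.2 / |d p.1 p.2| with hf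
  refine ⟨univ.inf' hne f, ?_, ?_⟩
  · rw [gt_iff_lt, Finset.lt_inf'_iff]
    intro p _
    by_cases hd : d p.1 p.2 = 0
    · simp [hf, hd]
    · simp only [hf, if_neg hd]
      exact div_pos (hsupp _ _ hd) (abs_pos.mpr hd)
  · intro t ht i o
    by_cases hd : d i o = 0
    · simpa [hd] using h0 i o
    · have h1 : univ.inf' hne f ≤ z i o / |d i o| := by
        have := Finset.inf'_le f (Finset.mem_univ (i, o))
        exact this.trans_eq (by simp [hf, hd])
      have habs : |t * d i o| ≤ z i o := by
        rw [abs_mul]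
        calc |t| * |d i o| ≤ (z i o / |d i o|) * |d i o| :=
              mul_le_mul_of_nonneg_right (ht.trans h1) (abs_nonneg _)
          _ = z i o := by field_simp
      have := (abs_le.mp habs).1
      linarith

set_option maxHeartbeats 1000000 in
lemma card_supp_le (hn : 0 < n) (hm : 0 < m) (v : Fin n → Fin m → ℝ)
    (hV : ∀ i, 0 < ∑ o, v i o) (z : Fin n → Fin m → ℝ)
    (hz : isAlloc z) (heq : equitable v z)
    (hmax : ∀ z', isAlloc z' → equitable v z' →
      util v z' ⟨0, hn⟩ ≤ util v z ⟨0, hn⟩)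
    (hmin : ∀ z', isAlloc z' → equitable v z' →
      util v z' ⟨0, hn⟩ = util v z ⟨0, hn⟩ →
      (univ.filter fun p : Fin n × Fin m => 0 < z p.1 p.2).card ≤
        (univ.filter fun p : Fin n × Fin m => 0 < z' p.1 p.2).card) :
    (univ.filter fun p : Fin n × Fin m => 0 < z p.1 p.2).card ≤ m + (n - 1) := by
  classical
  haveI : Nonempty (Fin n × Fin m) := ⟨(⟨0, hn⟩, ⟨0, hm⟩)⟩
  set i0 : Fin n := ⟨0, hn⟩ with hi0
  have hVne : ∀ i, (∑ o, v i o) ≠ 0 := fun i => (hV i).ne'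
  set e : {p : Fin n × Fin m // 0 < z p.1 p.2} → (Fin n → Fin m → ℝ) :=
    fun p => Pi.single p.1.1 (Pi.single p.1.2 1) with he
  have hind : LinearIndependent ℝ (fun p => Ltot hn v (e p)) := by
    by_contra hdep
    obtain ⟨c, hc0, p₀, hcp₀⟩ := Fintype.not_linearIndependent_iff.mp hdep
    obtain ⟨d, hd⟩ : ∃ d : Fin n → Fin m → ℝ, d = ∑ p, c p • e p := ⟨_, rfl⟩
    have hdapp : ∀ i o, d i o = ∑ p : {p : Fin n × Fin m // 0 < z p.1 p.2},
        c p * (e p i o) := by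
      intro i o
      rw [hd]
      simp [Finset.sum_apply]
    have hd1 : ∀ p : {p : Fin n × Fin m // 0 < z p.1 p.2},
        d p.1.1 p.1.2 = c p := by
      intro p
      rw [hdapp, Finset.sum_eq_single p]
      · simp [he, Pi.single_apply]
      · intro q _ hq
        by_cases h1 : p.1.1 = q.1.1
        · by_cases h2 : p.1.2 = q.1.2
          · exact absurd (Subtype.ext (Prod.ext h1.symm h2.symm)) hq
          · simp [he, Pi.single_apply, h1, h2]
        · simp [he, Pi.single_apply, h1]
      · exact fun h => absurd (mem_univ p) h
    have hd0 : ∀ i o, ¬ 0 < z i o → d i o = 0 := by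
      intro i o hio
      rw [hdapp]
      apply Finset.sum_eq_zero
      intro q _
      by_cases h1 : i = q.1.1
      · by_cases h2 : o = q.1.2
        · exact absurd (by rw [h1, h2]; exact q.2) hio
        · simp [he, Pi.single_apply, h1, h2]
      · simp [he, Pi.single_apply, h1]
    have hsupp : ∀ i o, d i o ≠ 0 → 0 < z i o := by
      intro i o h
      by_contra h'
      exact h (hd0 i o h')
    have hLd : Ltot hn v d = 0 := by
      rw [hd, map_sum]
      simp only [map_smul]
      exact hc0
    have hcs : ∀ o, ∑ i, d i o = 0 := by
      intro o
      have h1 : colSumL n m d = 0 := congrArg Prod.fst hLd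
      have := congrFun h1 o
      simpa [colSumL] using this
    have hg : gL v d = 0 := by
      have h2 := congrArg Prod.snd hLd
      have := congrArg Subtype.val h2
      simpa [Ltot, LinearMap.codRestrict] using this
    -- all relative marginal utilities equal
    set s : ℝ := (∑ o, v i0 o)⁻¹ * utilL v i0 d with hs
    have hri : ∀ i, (∑ o, v i o)⁻¹ * utilL v i d = s := by
      intro i
      have h1 := congrFun hg i
      have h2 := congrFun hg i0
      rw [gL_apply] at h1 h2
      simp only [Pi.zero_apply, sub_eq_zero] at h1 h2
      rw [hs, h1, h2]
    have hutil : ∀ i, utilL v i d = s * (∑ o, v i o) := by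
      intro i
      have h := hri i
      rw [inv_mul_eq_div, div_eq_iff (hVne i)] at h
      exact h
    by_cases hs0 : s = 0
    · -- null direction: shrink support, contradict minimality
      have hut : ∀ i, utilL v i d = 0 := by
        intro i; rw [hutil i, hs0, zero_mul]
      have hdp₀ : d p₀.1.1 p₀.1.2 ≠ 0 := by rw [hd1 p₀]; exact hcp₀
      set σ : ℝ := if d p₀.1.1 p₀.1.2 < 0 then 1 else -1 with hσ
      set d' : Fin n → Fin m → ℝ := fun i o => σ * d i o with hd'
      have hσne : σ ≠ 0 := by
        rw [hσ]; split <;> norm_num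
      have hd'p₀ : d' p₀.1.1 p₀.1.2 < 0 := by
        rw [hd', hσ]
        by_cases h : d p₀.1.1 p₀.1.2 < 0
        · simpa [h] using h
        · have : 0 < d p₀.1.1 p₀.1.2 := lt_of_le_of_ne (not_lt.mp h) (Ne.symm hdp₀)
          simpa [h] using this
      have hsupp' : ∀ i o, d' i o ≠ 0 → 0 < z i o := by
        intro i o h
        apply hsupp
        intro hc
        exact h (by show σ * d i o = 0; rw [hc, mul_zero])
      have hcs' : ∀ o, ∑ i, d' i o = 0 := by
        intro o
        simp only [hd', ← Finset.mul_sum, hcs o, mul_zero]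
      have hut' : ∀ i, utilL v i d' = 0 := by
        intro i
        have : utilL v i d' = σ * utilL v i d := by
          simp [utilL, hd', Finset.mul_sum]; ring_nf
          apply Finset.sum_congr rfl
          intro o _; ring
        rw [this, hut i, mul_zero]
      set D : Finset (Fin n × Fin m) :=
        univ.filter fun p => d' p.1 p.2 < 0 with hD
      have hDne : D.Nonempty := ⟨p₀.1, by simp [hD, hd'p₀]⟩
      set t₀ : ℝ := D.inf' hDne fun p => z p.1 p.2 / (-(d' p.1 p.2)) with ht₀
      have ht₀pos : 0 < t₀ := by
        rw [ht₀, Finset.lt_inf'_iff]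
        intro p hp
        rw [hD, mem_filter] at hp
        exact div_pos (hsupp' _ _ (ne_of_lt hp.2)) (by linarith [hp.2])
      obtain ⟨q₀, hq₀mem, hq₀⟩ := Finset.exists_mem_eq_inf' hDne
        (fun p => z p.1 p.2 / (-(d' p.1 p.2)))
      have hq₀neg : d' q₀.1 q₀.2 < 0 := by
        rw [hD, mem_filter] at hq₀mem; exact hq₀mem.2
      set z' : Fin n → Fin m → ℝ := fun i o => z i o + t₀ * d' i o with hz'
      have hz'alloc : isAlloc z' := by
        constructor
        · intro i o
          by_cases hdo : d' i o < 0
          · have hmem : (i, o) ∈ D := by rw [hD, mem_filter]; exact ⟨mem_univ _, hdo⟩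
            have h1 : t₀ ≤ z i o / (-(d' i o)) :=
              Finset.inf'_le (fun p => z p.1 p.2 / (-(d' p.1 p.2))) hmem
            have h2 : t₀ * (-(d' i o)) ≤ z i o :=
              (le_div_iff₀ (by linarith)).mp h1
            simp only [hz']
            linarith
          · have := not_lt.mp hdo
            have := hz.1 i o
            simp only [hz']
            nlinarith
        · intro o
          simp only [hz', Finset.sum_add_distrib, ← Finset.mul_sum, hcs' o,
            mul_zero, add_zero]
          exact hz.2 o
      have hu' : ∀ i, util v z' i = util v z i := by
        intro i
        rw [hz']
        rw [util_add_mul, hut' i, mul_zero, add_zero]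
      have hz'eq : equitable v z' := by
        intro i j
        rw [hu' i, hu' j]
        exact heq i j
      have hcount := hmin z' hz'alloc hz'eq (hu' i0)
      -- but z' has strictly smaller support
      have hsub : (univ.filter fun p : Fin n × Fin m => 0 < z' p.1 p.2) ⊆
          (univ.filter fun p : Fin n × Fin m => 0 < z p.1 p.2) := by
        intro p hp
        rw [mem_filter] at hp ⊢
        refine ⟨mem_univ _, ?_⟩
        by_contra hzp
        have hd'0 : d' p.1 p.2 = 0 := by
          by_contra h
          exact hzp (hsupp' _ _ h)
        have hz0 : z p.1 p.2 = 0 := le_antisymm (not_lt.mp hzp) (hz.1 _ _)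
        rw [hz'] at hp
        simp only [hz0, hd'0, mul_zero, add_zero] at hp
        exact lt_irrefl _ hp.2
      have hq₀z : q₀ ∈ (univ.filter fun p : Fin n × Fin m => 0 < z p.1 p.2) := by
        rw [mem_filter]
        exact ⟨mem_univ _, hsupp' _ _ (ne_of_lt hq₀neg)⟩
      have hz'q₀ : z' q₀.1 q₀.2 = 0 := by
        have hq₀t : t₀ = z q₀.1 q₀.2 / -d' q₀.1 q₀.2 := ht₀.trans hq₀
        have hne : d' q₀.1 q₀.2 ≠ 0 := ne_of_lt hq₀neg
        show z q₀.1 q₀.2 + t₀ * d' q₀.1 q₀.2 = 0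
        rw [hq₀t]
        field_simp
        ring
      have hq₀z' : q₀ ∉ (univ.filter fun p : Fin n × Fin m => 0 < z' p.1 p.2) := by
        rw [mem_filter]
        rintro ⟨-, hpos⟩
        rw [hz'q₀] at hpos
        exact lt_irrefl 0 hpos
      have hlt : (univ.filter fun p : Fin n × Fin m => 0 < z' p.1 p.2).card <
          (univ.filter fun p : Fin n × Fin m => 0 < z p.1 p.2).card :=
        Finset.card_lt_card ((Finset.ssubset_iff_of_subset hsub).mpr ⟨q₀, hq₀z, hq₀z'⟩)
      omega
    · -- improving direction: contradict maximality
      obtain ⟨ε, hε, hfeas⟩ := exists_eps z d hz.1 hsupp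
      set t : ℝ := if 0 < s then ε else -ε with ht
      have hts : 0 < t * s := by
        rw [ht]
        rcases lt_trichotomy s 0 with h | h | h
        · simp only [if_neg (not_lt.mpr h.le)]
          nlinarith
        · exact absurd h hs0
        · simp only [if_pos h]
          nlinarith
      have habs : |t| ≤ ε := by
        rw [ht]
        split
        · simp [abs_of_pos hε]
        · simp [abs_of_pos hε]
      set z'' : Fin n → Fin m → ℝ := fun i o => z i o + t * d i o with hz''
      have hz''alloc : isAlloc z'' := by
        constructor
        · exact hfeas t habs
        · intro o
          simp only [hz'', Finset.sum_add_distrib, ← Finset.mul_sum, hcs o,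
            mul_zero, add_zero]
          exact hz.2 o
      have hu'' : ∀ i, util v z'' i = util v z i + t * (s * (∑ o, v i o)) := by
        intro i
        rw [hz'', util_add_mul, hutil i]
      have hz''eq : equitable v z'' := by
        intro i j
        rw [hu'' i, hu'' j]
        have h1 : ∀ k, (util v z k + t * (s * (∑ o, v k o))) / (∑ o, v k o)
            = util v z k / (∑ o, v k o) + t * s := by
          intro k
          rw [add_div]
          congr 1
          rw [mul_div_assoc, mul_div_assoc, div_self (hVne k), mul_one]
        rw [h1 i, h1 j, heq i j]
      have := hmax z'' hz''alloc hz''eq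
      rw [hu'' i0] at this
      nlinarith [hV i0, mul_pos hts (hV i0)]
  -- from linear independence, bound the cardinality
  have hcard := LinearIndependent.fintype_card_le_finrank hind
  rw [finrank_target hn] at hcard
  calc (univ.filter fun p : Fin n × Fin m => 0 < z p.1 p.2).card
      = Fintype.card {p : Fin n × Fin m // 0 < z p.1 p.2} :=
        (Fintype.card_subtype _).symm
    _ ≤ m + (n - 1) := hcard


lemma util_continuous (v : Fin n → Fin m → ℝ) (i : Fin n) :
    Continuous fun z : Fin n → Fin m → ℝ => util v z i := by
  simp only [util]
  exact continuous_finset_sum _ fun o _ =>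
    continuous_const.mul ((continuous_apply o).comp (continuous_apply i))

lemma exists_opt (hn : 0 < n) (v : Fin n → Fin m → ℝ)
    (hV : ∀ i, 0 < ∑ o, v i o) :
    ∃ z, (isAlloc z ∧ equitable v z) ∧
      ∀ z', isAlloc z' → equitable v z' → util v z' ⟨0, hn⟩ ≤ util v z ⟨0, hn⟩ := by
  classical
  set S : Set (Fin n → Fin m → ℝ) := {z | isAlloc z ∧ equitable v z} with hS
  have hn' : (n : ℝ) ≠ 0 := Nat.cast_ne_zero.mpr hn.ne'
  have hSne : S.Nonempty := by
    refine ⟨fun _ _ => (n : ℝ)⁻¹, ⟨⟨fun i o => by positivity, fun o => ?_⟩, ?_⟩⟩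
    · rw [Finset.sum_const, card_univ, Fintype.card_fin, nsmul_eq_mul]
      field_simp
    · intro i j
      have h : ∀ k : Fin n,
          util v (fun _ _ => (n : ℝ)⁻¹) k / (∑ o, v k o) = (n : ℝ)⁻¹ := by
        intro k
        show (∑ o, v k o * (n : ℝ)⁻¹) / (∑ o, v k o) = (n : ℝ)⁻¹
        rw [← Finset.sum_mul, mul_comm, mul_div_assoc, div_self (hV k).ne', mul_one]
      rw [h i, h j]
  have hK : IsCompact (Set.pi Set.univ fun _ : Fin n =>
      Set.pi Set.univ fun _ : Fin m => Set.Icc (0:ℝ) 1) :=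
    isCompact_univ_pi fun _ => isCompact_univ_pi fun _ => isCompact_Icc
  have hsubK : S ⊆ Set.pi Set.univ fun _ : Fin n =>
      Set.pi Set.univ fun _ : Fin m => Set.Icc (0:ℝ) 1 := by
    rintro z ⟨⟨h0, h1⟩, -⟩
    intro i _
    intro o _
    refine ⟨h0 i o, ?_⟩
    calc z i o ≤ ∑ i', z i' o :=
          Finset.single_le_sum (fun i' _ => h0 i' o) (mem_univ i)
      _ = 1 := h1 o
  have hSclosed : IsClosed S := by
    have h1 : S = (⋂ (i) (o), {z : Fin n → Fin m → ℝ | 0 ≤ z i o}) ∩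
        ((⋂ o, {z : Fin n → Fin m → ℝ | ∑ i, z i o = 1}) ∩
          ⋂ (i) (j), {z : Fin n → Fin m → ℝ |
            util v z i / (∑ o, v i o) = util v z j / (∑ o, v j o)}) := by
      ext z
      simp only [hS, Set.mem_setOf_eq, Set.mem_inter_iff, Set.mem_iInter,
        isAlloc, equitable]
      tauto
    rw [h1]
    refine IsClosed.inter ?_ (IsClosed.inter ?_ ?_)
    · exact isClosed_iInter fun i => isClosed_iInter fun o =>
        isClosed_le continuous_const ((continuous_apply o).comp (continuous_apply i))
    · exact isClosed_iInter fun o => isClosed_eq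
        (continuous_finset_sum _ fun i _ =>
          (continuous_apply o).comp (continuous_apply i)) continuous_const
    · exact isClosed_iInter fun i => isClosed_iInter fun j =>
        isClosed_eq ((util_continuous v i).div_const _) ((util_continuous v j).div_const _)
  have hScomp : IsCompact S := hK.of_isClosed_subset hSclosed hsubK
  obtain ⟨z, hzS, hzmax⟩ := hScomp.exists_isMaxOn hSne
    ((util_continuous v ⟨0, hn⟩).continuousOn)
  exact ⟨z, hzS, fun z' h1 h2 => hzmax ⟨h1, h2⟩⟩

end MaxEqAux

/-- If all total values are positive, there exists an equitable allocation with at most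
`n − 1` sharings whose common relative value is maximal among equitable allocations. -/
theorem exists_max_equitable_few_sharings {n m : ℕ} (hn : 0 < n)
    (v : Fin n → Fin m → ℝ) (hV : ∀ i, 0 < ∑ o, v i o) :
    ∃ z : Fin n → Fin m → ℝ, isAlloc z ∧ sharings z ≤ n - 1 ∧ equitable v z ∧
      ∀ z' : Fin n → Fin m → ℝ, isAlloc z' → equitable v z' →
        ∀ i, util v z' i / (∑ o, v i o) ≤ util v z i / (∑ o, v i o) := by
  classical
  rcases Nat.eq_zero_or_pos m with hm | hm
  · exfalso
    have := hV ⟨0, hn⟩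
    subst hm
    simpa using this
  obtain ⟨z₀, ⟨hz₀a, hz₀e⟩, hz₀max⟩ := MaxEqAux.exists_opt hn v hV
  set i0 : Fin n := ⟨0, hn⟩ with hi0
  set C : Set ℕ := {k | ∃ z : Fin n → Fin m → ℝ,
    (isAlloc z ∧ equitable v z ∧ util v z i0 = util v z₀ i0) ∧
      (univ.filter fun p : Fin n × Fin m => 0 < z p.1 p.2).card = k} with hC
  have hCne : C.Nonempty := ⟨_, z₀, ⟨hz₀a, hz₀e, rfl⟩, rfl⟩
  obtain ⟨z, ⟨hza, hze, hzu⟩, hzc⟩ := Nat.sInf_mem hCne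
  have hzmax : ∀ z', isAlloc z' → equitable v z' →
      util v z' i0 ≤ util v z i0 := by
    intro z' h1 h2
    rw [hzu]
    exact hz₀max z' h1 h2
  have hzmin : ∀ z', isAlloc z' → equitable v z' →
      util v z' i0 = util v z i0 →
      (univ.filter fun p : Fin n × Fin m => 0 < z p.1 p.2).card ≤
        (univ.filter fun p : Fin n × Fin m => 0 < z' p.1 p.2).card := by
    intro z' h1 h2 h3
    rw [hzc]
    exact Nat.sInf_le ⟨z', ⟨h1, h2, h3.trans hzu⟩, rfl⟩
  have hcount := MaxEqAux.card_supp_le hn hm v hV z hza hze hzmax hzmin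
  refine ⟨z, hza, ?_, hze, ?_⟩
  · have hpos : ∀ o, (univ.filter fun i => 0 < z i o).Nonempty := by
      intro o
      by_contra h
      rw [Finset.not_nonempty_iff_eq_empty, Finset.filter_eq_empty_iff] at h
      have h0 : ∑ i, z i o = 0 :=
        Finset.sum_eq_zero fun i _ =>
          le_antisymm (not_lt.mp (h (mem_univ i))) (hza.1 i o)
      rw [hza.2 o] at h0
      norm_num at h0
    have hsum : ∑ o, (univ.filter fun i => 0 < z i o).card =
        (univ.filter fun p : Fin n × Fin m => 0 < z p.1 p.2).card := by
      simp only [Finset.card_filter]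
      rw [Fintype.sum_prod_type]
      exact Finset.sum_comm
    have h1 : sharings z + m = ∑ o, (univ.filter fun i => 0 < z i o).card := by
      rw [sharings]
      have h2 : ∑ o : Fin m, ((univ.filter fun i => 0 < z i o).card - 1 + 1) =
          ∑ o, (univ.filter fun i => 0 < z i o).card :=
        Finset.sum_congr rfl fun o _ => by
          have := Finset.card_pos.mpr (hpos o); omega
      rw [← h2, Finset.sum_add_distrib]
      simp
    rw [hsum] at h1
    omega
  · intro z' h1 h2 i
    have h3 : util v z' i / (∑ o, v i o) = util v z' i0 / (∑ o, v i0 o) := h2 i i0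
    have h4 : util v z i / (∑ o, v i o) = util v z i0 / (∑ o, v i0 o) := hze i i0
    rw [h3, h4]
    exact div_le_div_of_nonneg_right (hzmax z' h1 h2) (hV i0).le
end

section
/- The n(n−1) bound for consensus allocations is tight: there is an instance with n agents and n(n−1) goods in which every consensus allocation must share all n(n−1) objects. -/
open Finset

/-- Tightness of the `n(n−1)` bound for consensus allocations: with `n` agents and
`n(n−1)` goods partitioned into `n` disjoint sets of size `n − 1` (the `owner` fibers),
where agent `i` values his own goods at `n − 0.5` and the others at `0.5/(n−1)`,
every consensus allocation must share every object. -/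
theorem consensus_tight_all_shared (n : ℕ) (hn : 2 ≤ n)
    (owner : Fin (n * (n - 1)) → Fin n)
    (howner : ∀ i, (univ.filter fun o => owner o = i).card = n - 1)
    (v : Fin n → Fin (n * (n - 1)) → ℝ)
    (hv : ∀ i o, v i o = if owner o = i then (n : ℝ) - 1/2 else (1/2) / ((n : ℝ) - 1))
    (z : Fin n → Fin (n * (n - 1)) → ℝ) (hz : isAlloc z)
    (hcons : ∀ i j, ∑ o, v i o * z j o = (n : ℝ) - 1) :
    ∀ o, ∃ i, 0 < z i o ∧ z i o < 1 := by
  obtain ⟨hpos, hsum⟩ := hz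
  have hn2 : (2 : ℝ) ≤ (n : ℝ) := by exact_mod_cast hn
  intro o
  by_contra h
  push_neg at h
  -- each z i o is 0 or 1
  have hle : ∀ i, z i o ≤ 1 := by
    intro i
    calc z i o ≤ ∑ i', z i' o :=
          Finset.single_le_sum (fun i' _ => hpos i' o) (mem_univ i)
      _ = 1 := hsum o
  -- some j takes the whole object
  have hj : ∃ j, z j o = 1 := by
    by_contra hj
    push_neg at hj
    have hall : ∀ i, z i o = 0 := by
      intro i
      rcases lt_or_eq_of_le (hpos i o) with h1 | h1
      · exact absurd (lt_of_le_of_ne (hle i) (hj i)) (not_lt.2 (h i h1))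
      · exact h1.symm
    have := hsum o
    simp [hall] at this
  obtain ⟨j, hj1⟩ := hj
  set k := owner o with hk
  have hvnonneg : ∀ o', 0 ≤ v k o' := by
    intro o'
    rw [hv]
    split
    · linarith
    · apply div_nonneg <;> linarith
  have hge : v k o * z j o ≤ ∑ o', v k o' * z j o' :=
    Finset.single_le_sum (fun o' _ => mul_nonneg (hvnonneg o') (hpos j o')) (mem_univ o)
  have hvk : v k o = (n : ℝ) - 1/2 := by rw [hv, if_pos hk.symm]
  rw [hvk, hj1, hcons k j] at hge
  linarith
end

section
/- In any consensus allocation, every 'big' good of the tightness instance must be shared: if agent i values good o at n−0.5 > n−1, then o cannot be fully allocated to any single agent in a consensus allocation. -/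
open Finset

/-- In a consensus allocation of the tightness instance, a 'big' good (valued by
agent `i` at `n − 0.5 > n − 1`, with all of `i`'s values nonnegative) cannot be fully
allocated to any single agent. -/
theorem big_good_must_be_shared {n m : ℕ} (hn : 2 ≤ n)
    (v : Fin n → Fin m → ℝ) (i : Fin n) (o : Fin m)
    (hpos : ∀ o', 0 ≤ v i o') (hio : v i o = (n : ℝ) - 1/2)
    (z : Fin n → Fin m → ℝ) (hz : isAlloc z)
    (hcons : ∀ j, ∑ o', v i o' * z j o' = (n : ℝ) - 1) :
    ∀ j, z j o < 1 := by
  intro j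
  by_contra h
  push_neg at h
  have hterm : ∀ o' ∈ Finset.univ, (0:ℝ) ≤ v i o' * z j o' :=
    fun o' _ => mul_nonneg (hpos o') (hz.1 j o')
  have hle : v i o * z j o ≤ ∑ o', v i o' * z j o' :=
    Finset.single_le_sum hterm (Finset.mem_univ o)
  have h1 : ((n:ℝ) - 1/2) * 1 ≤ v i o * z j o := by
    rw [hio]
    apply mul_le_mul_of_nonneg_left h
    have : (2:ℝ) ≤ (n:ℝ) := by exact_mod_cast hn
    linarith
  rw [hcons j] at hle
  linarith
end

section
/- Correctness of the DistinctBalancedPartition reduction for consensus allocation (forward direction): if the 2p distinct integers a_1,…,a_{2p} with sum 2S admit a partition into two size-p subsets of equal sum S, then the two-agent instance where Alice values object o at a_o and Bob at a_o + b (for fixed 0 < b < 1/(4p)) admits a consensus allocation with zero sharings. -/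
open Finset

/-- Forward direction of the DistinctBalancedPartition reduction: if the `2p` distinct
positive integers `a` (sum `2S`) admit a partition into two size-`p` subsets of equal sum
`S`, then the two-agent instance (Alice values `o` at `a o`, Bob at `a o + b` with
`0 < b < 1/(4p)`) admits an integral (zero-sharing) consensus allocation. -/
theorem distinct_balanced_partition_forward (p : ℕ) (hp : 0 < p) (S : ℕ)
    (a : Fin (2 * p) → ℕ) (ha : ∀ o, 0 < a o) (hainj : Function.Injective a)
    (hasum : ∑ o, a o = 2 * S)
    (b : ℝ) (hb : 0 < b) (hb' : b < 1 / (4 * p))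
    (v : Fin 2 → Fin (2 * p) → ℝ)
    (hvA : ∀ o, v 0 o = a o) (hvB : ∀ o, v 1 o = a o + b)
    (hpart : ∃ X : Finset (Fin (2 * p)), X.card = p ∧ ∑ o ∈ X, a o = S) :
    ∃ z : Fin 2 → Fin (2 * p) → ℝ, isAlloc z ∧ (∀ i o, z i o = 0 ∨ z i o = 1) ∧
      ∀ i j, ∑ o, v i o * z j o = (∑ o, v i o) / 2 := by
  obtain ⟨X, hXcard, hXsum⟩ := hpart
  refine ⟨fun i o => if (o ∈ X ↔ i = 0) then 1 else 0, ⟨?_, ?_⟩, ?_, ?_⟩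
  · intro i o; dsimp only; split <;> norm_num
  · intro o
    rw [Fin.sum_univ_two]
    by_cases h : o ∈ X <;> simp [h]
  · intro i o; dsimp only; split <;> simp
  · have hXc : Xᶜ.card = p := by
      rw [Finset.card_compl, hXcard]; simp; omega
    have hSA : ∑ o ∈ X, (a o : ℝ) = S := by exact_mod_cast hXsum
    have htot : ∑ o, (a o : ℝ) = 2 * S := by exact_mod_cast hasum
    have hSc : ∑ o ∈ Xᶜ, (a o : ℝ) = S := by
      have := Finset.sum_add_sum_compl X (fun o => (a o : ℝ))
      rw [hSA, htot] at this; linarith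
    have hSAb : ∑ o ∈ X, ((a o : ℝ) + b) = S + p * b := by
      rw [Finset.sum_add_distrib, hSA, Finset.sum_const, hXcard, nsmul_eq_mul]
    have hScb : ∑ o ∈ Xᶜ, ((a o : ℝ) + b) = S + p * b := by
      rw [Finset.sum_add_distrib, hSc, Finset.sum_const, hXc, nsmul_eq_mul]
    have htotb : ∑ o, ((a o : ℝ) + b) = 2 * S + 2 * p * b := by
      rw [Finset.sum_add_distrib, htot, Finset.sum_const, Finset.card_univ,
        Fintype.card_fin, nsmul_eq_mul]
      push_cast; ring
    intro i j
    fin_cases i <;> fin_cases j <;>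
      simp only [hvA, hvB, Fin.isValue, Fin.zero_eta, Fin.mk_one,
        show ((1:Fin 2) = 0) = False from by simp, iff_false, iff_true,
        show ((0:Fin 2) = 0) = True from by simp, iff_true,
        mul_ite, mul_one, mul_zero, ← Finset.mem_compl] <;>
      rw [Finset.sum_ite_mem, Finset.univ_inter]
    · rw [hSA, htot]; ring
    · rw [hSc, htot]; ring
    · rw [hSAb, htotb]; ring
    · rw [hScb, htotb]; ring
end

section
/- Correctness of the DistinctBalancedPartition reduction for consensus allocation (backward direction): if the two-agent instance (Alice values object o at a_o, Bob at a_o + b with 0 < b < 1/(4p)) admits an integral consensus allocation, then the integers a_1,…,a_{2p} admit a partition into two subsets of equal sum and equal cardinality p. -/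
open Finset

/-- Backward direction of the DistinctBalancedPartition reduction: if the two-agent
instance (Alice values `o` at `a o`, Bob at `a o + b` with `0 < b < 1/(4p)`) admits an
integral consensus allocation, then the integers `a` admit a partition into two subsets of
equal sum `S` and equal cardinality `p`. -/
theorem distinct_balanced_partition_backward (p : ℕ) (hp : 0 < p) (S : ℕ)
    (a : Fin (2 * p) → ℕ) (ha : ∀ o, 0 < a o) (hainj : Function.Injective a)
    (hasum : ∑ o, a o = 2 * S)
    (b : ℝ) (hb : 0 < b) (hb' : b < 1 / (4 * p))
    (v : Fin 2 → Fin (2 * p) → ℝ)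
    (hvA : ∀ o, v 0 o = a o) (hvB : ∀ o, v 1 o = a o + b)
    (hcons : ∃ z : Fin 2 → Fin (2 * p) → ℝ, isAlloc z ∧ (∀ i o, z i o = 0 ∨ z i o = 1) ∧
      ∀ i j, ∑ o, v i o * z j o = (∑ o, v i o) / 2) :
    ∃ X : Finset (Fin (2 * p)), X.card = p ∧ ∑ o ∈ X, a o = S := by
  obtain ⟨z, _, hz01, heq⟩ := hcons
  set X : Finset (Fin (2 * p)) := Finset.univ.filter (fun o => z 0 o = 1) with hX
  -- indicator rewriting
  have hind : ∀ (f : Fin (2 * p) → ℝ), ∑ o, f o * z 0 o = ∑ o ∈ X, f o := by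
    intro f
    rw [Finset.sum_filter]
    apply Finset.sum_congr rfl
    intro o _
    rcases hz01 0 o with h | h
    · simp [h]
    · simp [h]
  -- total sum of a as real
  have hasumR : ∑ o, (a o : ℝ) = 2 * S := by
    exact_mod_cast congrArg (Nat.cast : ℕ → ℝ) hasum
  -- Alice's equation
  have hA := heq 0 0
  simp only [hvA] at hA
  rw [hind] at hA
  rw [hasumR] at hA
  have hAS : ∑ o ∈ X, (a o : ℝ) = S := by rw [hA]; ring
  -- Bob's equation
  have hB := heq 1 0
  simp only [hvB] at hB
  rw [hind] at hB
  have hsumb : ∑ o : Fin (2 * p), ((a o : ℝ) + b) = 2 * S + 2 * p * b := by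
    rw [Finset.sum_add_distrib, hasumR, Finset.sum_const]
    simp only [Finset.card_univ, Fintype.card_fin, nsmul_eq_mul]
    push_cast
    ring
  rw [hsumb, Finset.sum_add_distrib, hAS, Finset.sum_const, nsmul_eq_mul] at hB
  have hcard : (X.card : ℝ) = p := by
    have : (X.card : ℝ) * b = p * b := by linarith
    exact mul_right_cancel₀ (ne_of_gt hb) this
  have hcardN : X.card = p := by exact_mod_cast hcard
  refine ⟨X, hcardN, ?_⟩
  have : ((∑ o ∈ X, a o : ℕ) : ℝ) = (S : ℝ) := by push_cast; exact hAS
  exact_mod_cast this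
end

section
/- Correctness of the DistinctPartition-to-DistinctBalancedPartition reduction (forward direction): given distinct positive integers a_1,…,a_n with sum 2S and a subset X ⊆ [n] with |X| = k ≤ n/2 and Σ_{i∈X} a_i = S, the constructed 4n numbers admit a subset of exactly 2n numbers summing to T = 3^{n+1}·S + (3^{n+1}−3)/2. -/
open Finset

lemma geom_aux (n : ℕ) : 2 * ∑ i ∈ Finset.range n, 3 ^ (i + 1) + 3 = 3 ^ (n + 1) := by
  induction n with
  | zero => simp
  | succ m ih =>
    rw [Finset.sum_range_succ]
    have h3 : (3:ℕ) ^ (m + 1 + 1) = 3 ^ (m + 1) * 3 := pow_succ _ _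
    omega

/-- Forward direction of the DistinctPartition → DistinctBalancedPartition reduction:
from a subset `X` with `|X| = k ≤ n/2` and `Σ_{i∈X} a i = S`, the constructed `4n`
numbers (`n` big numbers `3^{n+1}·a i` and `n` small triplets `(3^{i+1}, s i 0, s i 1)`
with `s i 0 + s i 1 = 3^{i+1}`) admit a subset of exactly `2n` numbers summing to
`3^{n+1}·S + (3^{n+1} − 3)/2`. -/
theorem distinct_to_balanced_forward (n : ℕ) (hn : 0 < n) (S : ℕ)
    (a : Fin n → ℕ) (ha : ∀ i, 0 < a i) (hainj : Function.Injective a)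
    (hasum : ∑ i, a i = 2 * S)
    (s : Fin n → Fin 2 → ℕ)
    (hs : ∀ i, 0 < s i 0 ∧ 0 < s i 1 ∧ s i 0 ≠ s i 1 ∧ s i 0 + s i 1 = 3 ^ ((i : ℕ) + 1))
    (w : (Fin n ⊕ Fin n × Fin 3) → ℕ)
    (hwb : ∀ i, w (Sum.inl i) = 3 ^ (n + 1) * a i)
    (hw0 : ∀ i, w (Sum.inr (i, 0)) = 3 ^ ((i : ℕ) + 1))
    (hw1 : ∀ i, w (Sum.inr (i, 1)) = s i 0)
    (hw2 : ∀ i, w (Sum.inr (i, 2)) = s i 1)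
    (X : Finset (Fin n)) (hX : 2 * X.card ≤ n) (hXsum : ∑ i ∈ X, a i = S) :
    ∃ Y : Finset (Fin n ⊕ Fin n × Fin 3), Y.card = 2 * n ∧
      ∑ y ∈ Y, w y = 3 ^ (n + 1) * S + (3 ^ (n + 1) - 3) / 2 := by
  classical
  set Y : Finset (Fin n ⊕ Fin n × Fin 3) :=
    X.image Sum.inl ∪ X.image (fun i => Sum.inr (i, 0)) ∪
      Xᶜ.image (fun i => Sum.inr (i, 1)) ∪ Xᶜ.image (fun i => Sum.inr (i, 2)) with hY
  have h1 : Function.Injective (Sum.inl : Fin n → Fin n ⊕ Fin n × Fin 3) :=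
    fun x y h => by simpa using h
  have h2 : ∀ c : Fin 3, Function.Injective (fun i : Fin n => (Sum.inr (i, c) : Fin n ⊕ Fin n × Fin 3)) :=
    fun c x y h => by simpa using h
  have d12 : Disjoint (X.image Sum.inl) (X.image (fun i => (Sum.inr (i, 0) : Fin n ⊕ Fin n × Fin 3))) := by
    simp [Finset.disjoint_left]
  have d3 : Disjoint (X.image Sum.inl ∪ X.image (fun i => Sum.inr (i, 0)))
      (Xᶜ.image (fun i => (Sum.inr (i, 1) : Fin n ⊕ Fin n × Fin 3))) := by
    rw [Finset.disjoint_left]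
    rintro x hx hx'
    obtain ⟨i, hi, rfl⟩ := Finset.mem_image.mp hx'
    rcases Finset.mem_union.mp hx with h | h
    · obtain ⟨j, hj, hji⟩ := Finset.mem_image.mp h
      exact absurd hji (by simp)
    · obtain ⟨j, hj, hji⟩ := Finset.mem_image.mp h
      have : (0 : Fin 3) = 1 := congrArg Prod.snd (Sum.inr.inj hji)
      exact absurd this (by decide)
  have d4 : Disjoint (X.image Sum.inl ∪ X.image (fun i => Sum.inr (i, 0)) ∪
      Xᶜ.image (fun i => Sum.inr (i, 1)))
      (Xᶜ.image (fun i => (Sum.inr (i, 2) : Fin n ⊕ Fin n × Fin 3))) := by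
    rw [Finset.disjoint_left]
    rintro x hx hx'
    obtain ⟨i, hi, rfl⟩ := Finset.mem_image.mp hx'
    rcases Finset.mem_union.mp hx with h | h
    · rcases Finset.mem_union.mp h with h' | h'
      · obtain ⟨j, hj, hji⟩ := Finset.mem_image.mp h'
        exact absurd hji (by simp)
      · obtain ⟨j, hj, hji⟩ := Finset.mem_image.mp h'
        have : (0 : Fin 3) = 2 := congrArg Prod.snd (Sum.inr.inj hji)
        exact absurd this (by decide)
    · obtain ⟨j, hj, hji⟩ := Finset.mem_image.mp h
      have : (1 : Fin 3) = 2 := congrArg Prod.snd (Sum.inr.inj hji)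
      exact absurd this (by decide)
  have hcardc : Xᶜ.card = n - X.card := by
    rw [Finset.card_compl, Fintype.card_fin]
  have hcard : Y.card = 2 * n := by
    rw [hY, Finset.card_union_of_disjoint d4, Finset.card_union_of_disjoint d3,
      Finset.card_union_of_disjoint d12,
      Finset.card_image_of_injective _ h1, Finset.card_image_of_injective _ (h2 0),
      Finset.card_image_of_injective _ (h2 1), Finset.card_image_of_injective _ (h2 2),
      hcardc]
    have := X.card_le_univ
    simp only [Finset.card_univ, Fintype.card_fin] at this
    omega
  refine ⟨Y, hcard, ?_⟩
  rw [hY, Finset.sum_union d4, Finset.sum_union d3, Finset.sum_union d12,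
    Finset.sum_image (fun x _ y _ h => h1 h), Finset.sum_image (fun x _ y _ h => h2 0 h),
    Finset.sum_image (fun x _ y _ h => h2 1 h), Finset.sum_image (fun x _ y _ h => h2 2 h)]
  simp only [hwb, hw0, hw1, hw2]
  rw [← Finset.mul_sum, hXsum]
  have hc : ∑ x ∈ Xᶜ, s x 0 + ∑ x ∈ Xᶜ, s x 1 = ∑ x ∈ Xᶜ, 3 ^ ((x : ℕ) + 1) := by
    rw [← Finset.sum_add_distrib]
    exact Finset.sum_congr rfl fun i _ => (hs i).2.2.2
  have huniv : ∑ x ∈ X, 3 ^ ((x : ℕ) + 1) + ∑ x ∈ Xᶜ, 3 ^ ((x : ℕ) + 1)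
      = ∑ i : Fin n, 3 ^ ((i : ℕ) + 1) := by
    rw [← Finset.sum_union disjoint_compl_right, Finset.union_compl]
  have hg : ∑ i : Fin n, 3 ^ ((i : ℕ) + 1) = ∑ i ∈ Finset.range n, 3 ^ (i + 1) :=
    Fin.sum_univ_eq_sum_range (fun i => 3 ^ (i + 1)) n
  have hge := geom_aux n
  omega
end

section
/- Correctness of the DistinctPartition-to-DistinctBalancedPartition reduction (backward direction): in the constructed instance, any subset of the 4n numbers summing to T = 3^{n+1}·S + (3^{n+1}−3)/2 must have its big numbers summing to exactly 3^{n+1}·S, and hence yields a subset X of the original integers with Σ_{i∈X} a_i = S. -/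
open Finset

lemma geo_sum_three (n : ℕ) :
    2 * ∑ i ∈ Finset.range n, 3 ^ (i + 1) = 3 ^ (n + 1) - 3 := by
  induction n with
  | zero => simp
  | succ n ih =>
    rw [Finset.sum_range_succ]
    have h1 : (3:ℕ) ^ (n + 2) = 3 * 3 ^ (n + 1) := by ring
    have h2 : 3 ≤ (3:ℕ) ^ (n + 1) := Nat.le_self_pow (by omega) 3
    omega

/-- Backward direction of the DistinctPartition → DistinctBalancedPartition reduction:
any subset `Y` of the constructed `4n` numbers summing to `T = 3^{n+1}·S + (3^{n+1}−3)/2`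
has its big numbers summing to exactly `3^{n+1}·S`, hence the corresponding subset of the
original integers sums to `S`. -/
theorem distinct_to_balanced_backward (n : ℕ) (hn : 0 < n) (S : ℕ)
    (a : Fin n → ℕ) (ha : ∀ i, 0 < a i) (hainat : Function.Injective a)
    (hasum : ∑ i, a i = 2 * S)
    (s : Fin n → Fin 2 → ℕ)
    (hs : ∀ i, 0 < s i 0 ∧ 0 < s i 1 ∧ s i 0 ≠ s i 1 ∧ s i 0 + s i 1 = 3 ^ ((i : ℕ) + 1))
    (w : (Fin n ⊕ Fin n × Fin 3) → ℕ)
    (hwb : ∀ i, w (Sum.inl i) = 3 ^ (n + 1) * a i)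
    (hw0 : ∀ i, w (Sum.inr (i, 0)) = 3 ^ ((i : ℕ) + 1))
    (hw1 : ∀ i, w (Sum.inr (i, 1)) = s i 0)
    (hw2 : ∀ i, w (Sum.inr (i, 2)) = s i 1)
    (Y : Finset (Fin n ⊕ Fin n × Fin 3))
    (hY : ∑ y ∈ Y, w y = 3 ^ (n + 1) * S + (3 ^ (n + 1) - 3) / 2) :
    (∑ y ∈ Y.filter (fun y => y.isLeft), w y) = 3 ^ (n + 1) * S ∧
      ∑ i ∈ univ.filter (fun i => Sum.inl i ∈ Y), a i = S := by
  classical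
  set M : ℕ := 3 ^ (n + 1) with hMdef
  have hM3 : 3 ≤ M := Nat.le_self_pow (by omega) 3
  have hModd : M % 2 = 1 := by
    rw [hMdef, Nat.pow_mod]; simp
  set A : ℕ := ∑ i ∈ univ.filter (fun i => Sum.inl i ∈ Y), a i with hAdef
  -- left sum equals M * A
  have hleft : ∑ y ∈ Y.filter (fun y => y.isLeft), w y = M * A := by
    have himg : Y.filter (fun y => y.isLeft)
        = (univ.filter (fun i => Sum.inl i ∈ Y)).image Sum.inl := by
      ext y
      cases y with
      | inl i => simp
      | inr p => simp
    rw [himg, Finset.sum_image (by intro x _ y _ h; exact Sum.inl_injective h),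
      hAdef, Finset.mul_sum]
    exact Finset.sum_congr rfl fun i _ => by rw [hwb i]
  -- right sum bound
  have hright : ∑ y ∈ Y.filter (fun y => ¬ y.isLeft), w y ≤ M - 3 := by
    have hsub : Y.filter (fun y => ¬ y.isLeft)
        ⊆ (univ : Finset (Fin n × Fin 3)).image Sum.inr := by
      intro y hy
      cases y with
      | inl i => simp at hy
      | inr p => simp
    calc ∑ y ∈ Y.filter (fun y => ¬ y.isLeft), w y
        ≤ ∑ y ∈ (univ : Finset (Fin n × Fin 3)).image Sum.inr, w y :=
          Finset.sum_le_sum_of_subset hsub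
      _ = ∑ p : Fin n × Fin 3, w (Sum.inr p) :=
          Finset.sum_image (by intro x _ y _ h; exact Sum.inr_injective h)
      _ = M - 3 := by
          rw [Fintype.sum_prod_type]
          have hrow : ∀ i : Fin n, ∑ j : Fin 3, w (Sum.inr (i, j)) = 2 * 3 ^ ((i:ℕ) + 1) := by
            intro i
            rw [Fin.sum_univ_three, hw0, hw1, hw2]
            have := (hs i).2.2.2
            omega
          rw [Finset.sum_congr rfl fun i _ => hrow i, ← Finset.mul_sum,
            Fin.sum_univ_eq_sum_range (fun i => 3 ^ (i + 1)) n, geo_sum_three]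
  set R : ℕ := ∑ y ∈ Y.filter (fun y => ¬ y.isLeft), w y with hRdef
  have key : M * A + R = M * S + (M - 3) / 2 := by
    rw [← hleft, hRdef, Finset.sum_filter_add_sum_filter_not, hY]
  set r : ℕ := (M - 3) / 2 with hrdef
  have hrM : r < M := by omega
  have hRM : R < M := by omega
  have hA : A = S := by
    have le1 : A ≤ S := by
      by_contra h
      push_neg at h
      have h' : M * (S + 1) ≤ M * A := Nat.mul_le_mul_left M h
      have h'' : M * (S + 1) = M * S + M := by ring
      linarith
    have le2 : S ≤ A := by
      by_contra h
      push_neg at h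
      have h' : M * (A + 1) ≤ M * S := Nat.mul_le_mul_left M h
      have h'' : M * (A + 1) = M * A + M := by ring
      linarith
    omega
  exact ⟨by rw [hleft, hA], hA⟩
end

section
/- The LP encoding of Partition always admits a feasible solution with at most k+1 nonzero variables, and admits a feasible solution with at most k nonzero variables if and only if the Partition instance a_1,…,a_k (with sum 2S) has an equal-sum split. -/
open Finset

/-- The LP encoding of Partition (variables `x i j ≥ 0`, constraints `x 0 j + x 1 j = 1`
and `Σ_j x 0 j · a j = Σ_j x 1 j · a j`) always has a feasible solution with at most
`k + 1` nonzero variables, and has a feasible solution with at most `k` nonzero variables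
iff the Partition instance has an equal-sum split. -/
theorem partition_lp_nonzeros (k S : ℕ) (a : Fin k → ℕ)
    (ha : ∀ j, 0 < a j) (hasum : ∑ j, a j = 2 * S) :
    (∃ x : Fin 2 → Fin k → ℝ, (∀ i j, 0 ≤ x i j) ∧ (∀ j, x 0 j + x 1 j = 1) ∧
        (∑ j, x 0 j * a j = ∑ j, x 1 j * a j) ∧
        (univ.filter fun q : Fin 2 × Fin k => x q.1 q.2 ≠ 0).card ≤ k + 1) ∧
    ((∃ x : Fin 2 → Fin k → ℝ, (∀ i j, 0 ≤ x i j) ∧ (∀ j, x 0 j + x 1 j = 1) ∧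
        (∑ j, x 0 j * a j = ∑ j, x 1 j * a j) ∧
        (univ.filter fun q : Fin 2 × Fin k => x q.1 q.2 ≠ 0).card ≤ k) ↔
      ∃ X : Finset (Fin k), ∑ j ∈ X, a j = S) := by
  classical
  have hacast : ∑ j, (a j : ℝ) = 2 * S := by exact_mod_cast hasum
  -- feasibility from a fractional assignment c with ∑ c a = S
  have feas : ∀ c : Fin k → ℝ, (∀ j, 0 ≤ c j) → (∀ j, c j ≤ 1) →
      (∑ j, c j * (a j : ℝ) = S) →
      ∃ x : Fin 2 → Fin k → ℝ, (∀ i j, 0 ≤ x i j) ∧ (∀ j, x 0 j + x 1 j = 1) ∧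
        (∑ j, x 0 j * a j = ∑ j, x 1 j * a j) ∧
        (∀ j, x 0 j = c j) ∧ (∀ j, x 1 j = 1 - c j) := by
    intro c h0 h1 hs
    refine ⟨![c, fun j => 1 - c j], ?_, ?_, ?_,
      fun j => by simp, fun j => by simp⟩
    · intro i j
      have hi : i = 0 ∨ i = 1 := by omega
      rcases hi with rfl | rfl
      · simpa using h0 j
      · simp only [Matrix.cons_val_one, Matrix.head_cons, Matrix.cons_val_zero]
        linarith [h1 j]
    · intro j
      simp only [Matrix.cons_val_zero, Matrix.cons_val_one, Matrix.head_cons]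
      ring
    · simp only [Matrix.cons_val_zero, Matrix.cons_val_one, Matrix.head_cons]
      have hsub : ∑ j, (1 - c j) * (a j : ℝ) = ∑ j, (a j : ℝ) - ∑ j, c j * (a j : ℝ) := by
        rw [← Finset.sum_sub_distrib]
        exact Finset.sum_congr rfl fun j _ => by ring
      rw [hs, hsub, hacast, hs]
      ring
  -- cardinality bound via a selector g and an exceptional set s
  have cardbound : ∀ (x : Fin 2 → Fin k → ℝ) (g : Fin k → Fin 2) (s : Finset (Fin 2 × Fin k)),
      (∀ i j, x i j ≠ 0 → (i, j) ∈ s ∨ i = g j) →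
      (univ.filter fun q : Fin 2 × Fin k => x q.1 q.2 ≠ 0).card ≤ s.card + k := by
    intro x g s hg
    have hsub : (univ.filter fun q : Fin 2 × Fin k => x q.1 q.2 ≠ 0)
        ⊆ s ∪ univ.image (fun j => (g j, j)) := by
      intro q hq
      simp only [mem_filter, mem_univ, true_and] at hq
      rcases hg q.1 q.2 hq with h | h
      · exact mem_union_left _ h
      · refine mem_union_right _ ?_
        simp only [mem_image, mem_univ, true_and]
        exact ⟨q.2, by rw [← h]⟩
    calc (univ.filter fun q : Fin 2 × Fin k => x q.1 q.2 ≠ 0).card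
        ≤ (s ∪ univ.image (fun j => (g j, j))).card := card_le_card hsub
      _ ≤ s.card + (univ.image (fun j => (g j, j))).card := card_union_le _ _
      _ ≤ s.card + k := by
          refine Nat.add_le_add_left (le_trans card_image_le ?_) _
          simp
  -- integral solutions from an exact subset
  have intSol : ∀ Y : Finset (Fin k), ∑ j ∈ Y, a j = S →
      ∃ x : Fin 2 → Fin k → ℝ, (∀ i j, 0 ≤ x i j) ∧ (∀ j, x 0 j + x 1 j = 1) ∧
        (∑ j, x 0 j * a j = ∑ j, x 1 j * a j) ∧
        (univ.filter fun q : Fin 2 × Fin k => x q.1 q.2 ≠ 0).card ≤ k := by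
    intro Y hY
    set c : Fin k → ℝ := fun j => if j ∈ Y then 1 else 0 with hc
    have hsum : ∑ j, c j * (a j : ℝ) = S := by
      have hterm : ∀ j, c j * (a j : ℝ) = if j ∈ Y then (a j : ℝ) else 0 := by
        intro j; by_cases h : j ∈ Y <;> simp [hc, h]
      rw [Finset.sum_congr rfl fun j _ => hterm j, Finset.sum_ite_mem, Finset.univ_inter,
        ← hY]
      push_cast
      ring
    obtain ⟨x, hx0, hx1, hxeq, hxc0, hxc1⟩ := feas c
      (fun j => by by_cases h : j ∈ Y <;> simp [hc, h])
      (fun j => by by_cases h : j ∈ Y <;> simp [hc, h]) hsum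
    refine ⟨x, hx0, hx1, hxeq, ?_⟩
    have := cardbound x (fun j => if j ∈ Y then 0 else 1) ∅ ?_
    · simpa using this
    · intro i j hne
      right
      have hi : i = 0 ∨ i = 1 := by omega
      rcases hi with rfl | rfl
      · by_cases h : j ∈ Y
        · simp [h]
        · exact absurd (by rw [hxc0 j]; simp [hc, h]) hne
      · by_cases h : j ∈ Y
        · exact absurd (by rw [hxc1 j]; simp [hc, h]) hne
        · simp [h]
  -- ∑ x 0 j * a j = S for any feasible solution
  have hx0S : ∀ x : Fin 2 → Fin k → ℝ, (∀ j, x 0 j + x 1 j = 1) →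
      (∑ j, x 0 j * (a j : ℝ) = ∑ j, x 1 j * (a j : ℝ)) → ∑ j, x 0 j * (a j : ℝ) = S := by
    intro x h1 h2
    have hsum2 : ∑ j, x 0 j * (a j : ℝ) + ∑ j, x 1 j * (a j : ℝ) = 2 * S := by
      rw [← Finset.sum_add_distrib, ← hacast]
      exact Finset.sum_congr rfl fun j _ => by rw [← add_mul, h1 j, one_mul]
    linarith
  -- the maximal subset with sum ≤ S
  obtain ⟨X, hXT, hXmax⟩ := Finset.exists_max_image
      (univ.filter fun Y : Finset (Fin k) => ∑ j ∈ Y, a j ≤ S)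
      (fun Y => ∑ j ∈ Y, a j) ⟨∅, by simp⟩
  simp only [mem_filter, mem_univ, true_and] at hXT
  constructor
  · -- part 1: always a solution with ≤ k+1 nonzeros
    rcases eq_or_lt_of_le hXT with hXS | hXS
    · obtain ⟨x, h1, h2, h3, h4⟩ := intSol X hXS
      exact ⟨x, h1, h2, h3, h4.trans (Nat.le_succ k)⟩
    · have hXne : X ≠ univ := by
        intro h
        rw [h] at hXS
        have : ∑ j ∈ (univ : Finset (Fin k)), a j = 2 * S := hasum
        omega
      obtain ⟨j₀, hj₀⟩ : ∃ j, j ∉ X := by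
        by_contra h
        push_neg at h
        exact hXne (Finset.eq_univ_iff_forall.mpr h)
      have hins : S < ∑ j ∈ X, a j + a j₀ := by
        by_contra h
        push_neg at h
        have hmem : insert j₀ X ∈
            (univ.filter fun Y : Finset (Fin k) => ∑ j ∈ Y, a j ≤ S) := by
          simp only [mem_filter, mem_univ, true_and]
          rw [Finset.sum_insert hj₀]
          omega
        have := hXmax _ hmem
        simp only [Finset.sum_insert hj₀] at this
        have := ha j₀
        omega
      have ha0 : (0 : ℝ) < a j₀ := by exact_mod_cast ha j₀
      set t : ℝ := ((S : ℝ) - ∑ j ∈ X, (a j : ℝ)) / a j₀ with ht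
      have hXSr : (∑ j ∈ X, (a j : ℝ)) ≤ S := by exact_mod_cast hXS.le
      have hinsr : (S : ℝ) < ∑ j ∈ X, (a j : ℝ) + a j₀ := by exact_mod_cast hins
      have ht0 : 0 ≤ t := div_nonneg (by linarith) ha0.le
      have ht1 : t ≤ 1 := by
        rw [div_le_one ha0]
        linarith
      set c : Fin k → ℝ := fun j => if j ∈ X then 1 else if j = j₀ then t else 0 with hc
      have hterm : ∀ j, c j * (a j : ℝ)
          = (if j ∈ X then (a j : ℝ) else 0) + (if j = j₀ then t * (a j₀ : ℝ) else 0) := by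
        intro j
        by_cases h1 : j ∈ X
        · have hne : j ≠ j₀ := fun h => hj₀ (h ▸ h1)
          simp [hc, h1, hne]
        · by_cases h2 : j = j₀
          · subst h2; simp [hc, h1]
          · simp [hc, h1, h2]
      have hsum : ∑ j, c j * (a j : ℝ) = S := by
        rw [Finset.sum_congr rfl fun j _ => hterm j, Finset.sum_add_distrib,
          Finset.sum_ite_mem, Finset.univ_inter, Finset.sum_ite_eq' univ j₀]
        simp only [mem_univ, if_pos]
        rw [ht, div_mul_cancel₀ _ ha0.ne']
        ring
      have hc0 : ∀ j, 0 ≤ c j := by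
        intro j
        by_cases h1 : j ∈ X
        · simp [hc, h1]
        · by_cases h2 : j = j₀ <;> simp [hc, h1, h2, hj₀, ht0]
      have hc1 : ∀ j, c j ≤ 1 := by
        intro j
        by_cases h1 : j ∈ X
        · simp [hc, h1]
        · by_cases h2 : j = j₀ <;> simp [hc, h1, h2, hj₀, ht1]
      obtain ⟨x, hx0, hx1, hxeq, hxc0, hxc1⟩ := feas c hc0 hc1 hsum
      refine ⟨x, hx0, hx1, hxeq, ?_⟩
      have hb := cardbound x (fun j => if j ∈ X then 0 else 1) {((0 : Fin 2), j₀)} ?_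
      · have : 1 + k = k + 1 := Nat.add_comm 1 k
        simpa [this] using hb
    -- selector property
      · intro i j hne
        have hi : i = 0 ∨ i = 1 := by omega
        rcases hi with rfl | rfl
        · by_cases h1 : j ∈ X
          · right; simp [h1]
          · by_cases h2 : j = j₀
            · left; simp [h2]
            · exact absurd (by rw [hxc0 j]; simp [hc, h1, h2]) hne
        · by_cases h1 : j ∈ X
          · exact absurd (by rw [hxc1 j]; simp [hc, h1]) hne
          · right; simp [h1]
  · -- part 2: iff
    constructor
    · rintro ⟨x, hx0, hx1, hxeq, hxcard⟩
      have hone : ∀ j, x 0 j ≠ 0 ∨ x 1 j ≠ 0 := by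
        intro j
        by_contra h
        push_neg at h
        have := hx1 j
        rw [h.1, h.2] at this
        norm_num at this
      set φ : Fin k → Fin 2 × Fin k := fun j => (if x 0 j ≠ 0 then 0 else 1, j) with hφ
      have hφinj : Function.Injective φ := fun a b h => congrArg Prod.snd h
      have hφmem : ∀ j, φ j ∈ univ.filter fun q : Fin 2 × Fin k => x q.1 q.2 ≠ 0 := by
        intro j
        simp only [mem_filter, mem_univ, true_and, hφ]
        by_cases h : x 0 j ≠ 0
        · simp [h]
        · have h' := (hone j).resolve_left h
          simpa [h] using h'
      have himg : univ.image φ = univ.filter fun q : Fin 2 × Fin k => x q.1 q.2 ≠ 0 := by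
        apply Finset.eq_of_subset_of_card_le
        · intro q hq
          simp only [mem_image, mem_univ, true_and] at hq
          obtain ⟨j, rfl⟩ := hq
          exact hφmem j
        · rw [Finset.card_image_of_injective _ hφinj]
          simpa using hxcard
      have hdich : ∀ j, x 0 j = 1 ∨ x 0 j = 0 := by
        intro j
        by_cases h : x 0 j ≠ 0
        · left
          have h1 : x 1 j = 0 := by
            by_contra h1
            have hmem : ((1 : Fin 2), j) ∈ univ.image φ := by
              rw [himg]
              simp only [mem_filter, mem_univ, true_and]
              exact h1
            simp only [mem_image, mem_univ, true_and] at hmem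
            obtain ⟨j', hj'⟩ := hmem
            have hj2 : j' = j := congrArg Prod.snd hj'
            subst hj2
            have hfst := congrArg Prod.fst hj'
            simp only [hφ, if_pos h] at hfst
            exact absurd hfst (by decide)
          linarith [hx1 j]
        · right; push_neg at h; exact h
      refine ⟨univ.filter fun j => x 0 j = 1, ?_⟩
      have hreal : ((∑ j ∈ univ.filter (fun j => x 0 j = 1), a j : ℕ) : ℝ) = S := by
        push_cast
        rw [← hx0S x hx1 hxeq, Finset.sum_filter]
        apply Finset.sum_congr rfl
        intro j _
        rcases hdich j with h | h <;> simp [h]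
      exact_mod_cast hreal
    · rintro ⟨X', hX'⟩
      exact intSol X' hX'
end
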